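/- arXiv:1210.3433 — 5 statements merged into one kernel-verified Lean document; each statement's English description precedes it below -/
import Mathlib

section
/- Let p be a prime, let T be an element of ℤ/pℤ, and let D be a nonzero element of ℤ/pℤ. Let N denote the number of x ∈ ℤ/pℤ satisfying x² − Tx + D = 0 (so N ∈ {0,1,2}). Then the number of matrices g ∈ GL₂(ℤ/pℤ) with trace equal to T and determinant equal to D is exactly p² + p(N − 1) (as an equality of integers). -/
open Matrix Finset

lemma pairs_card (p : ℕ) [Fact p.Prime] (k : ZMod p) :
    Nat.card {bc : ZMod p × ZMod p // bc.1 * bc.2 = k} =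
      if k = 0 then 2 * p - 1 else p - 1 := by
  haveI : NeZero p := ⟨(Fact.out : p.Prime).ne_zero⟩
  split_ifs with hk
  · subst hk
    have e : {bc : ZMod p × ZMod p // ¬ bc.1 * bc.2 = 0} ≃
        {b : ZMod p // b ≠ 0} × {c : ZMod p // c ≠ 0} :=
      (Equiv.subtypeEquivRight (fun bc => by simp [mul_eq_zero, not_or])).trans
        (Equiv.subtypeProdEquivProd)
    have h1 : Fintype.card {b : ZMod p // b ≠ 0} = p - 1 := by
      rw [Fintype.card_subtype_compl, Fintype.card_subtype_eq, ZMod.card]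
    have h2 : Fintype.card {bc : ZMod p × ZMod p // ¬ bc.1 * bc.2 = 0} = (p-1) * (p-1) := by
      rw [Fintype.card_congr e, Fintype.card_prod, h1]
    have h4 : Fintype.card {bc : ZMod p × ZMod p // ¬ bc.1 * bc.2 = 0} =
        p * p - Fintype.card {bc : ZMod p × ZMod p // bc.1 * bc.2 = 0} := by
      rw [Fintype.card_subtype_compl, Fintype.card_prod, ZMod.card]
    have hle : Fintype.card {bc : ZMod p × ZMod p // bc.1 * bc.2 = 0} ≤ p * p := by
      have := Fintype.card_subtype_le (fun bc : ZMod p × ZMod p => bc.1 * bc.2 = 0)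
      rwa [Fintype.card_prod, ZMod.card] at this
    rw [Nat.card_eq_fintype_card]
    have hp1 : 1 ≤ p := (Fact.out : p.Prime).one_le
    obtain ⟨q, rfl⟩ : ∃ q, p = q + 1 := ⟨p - 1, by omega⟩
    have hq : (q+1) * (q+1) = q*q + 2*q + 1 := by ring
    have hq2 : (q+1-1) * (q+1-1) = q*q := by simp
    omega
  · have e : {bc : ZMod p × ZMod p // bc.1 * bc.2 = k} ≃ {b : ZMod p // b ≠ 0} := by
      refine ⟨fun x => ⟨x.1.1, fun hb => hk ?_⟩, fun b => ⟨(b.1, b.1⁻¹ * k), ?_⟩, ?_, ?_⟩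
      · rw [← x.2, hb, zero_mul]
      · rw [← mul_assoc, mul_inv_cancel₀ b.2, one_mul]
      · rintro ⟨⟨b, c⟩, h⟩
        have hb : b ≠ 0 := fun hb => hk (by rw [← h, hb, zero_mul])
        simp only [Subtype.mk.injEq, Prod.mk.injEq]
        exact ⟨trivial, by rw [← h, ← mul_assoc, inv_mul_cancel₀ hb, one_mul]⟩
      · intro b; rfl
    rw [Nat.card_congr e, Nat.card_eq_fintype_card, Fintype.card_subtype_compl,
      Fintype.card_subtype_eq, ZMod.card]

theorem stmt_0 (p : ℕ) (hp : p.Prime) (T D : ZMod p) (hD : D ≠ 0)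
    (N : ℕ) (hN : N = Nat.card {x : ZMod p | x ^ 2 - T * x + D = 0}) :
    (Nat.card {g : GL (Fin 2) (ZMod p) |
        Matrix.trace (g : Matrix (Fin 2) (Fin 2) (ZMod p)) = T ∧
        Matrix.det (g : Matrix (Fin 2) (Fin 2) (ZMod p)) = D} : ℤ) =
      (p : ℤ) ^ 2 + (p : ℤ) * ((N : ℤ) - 1) := by
  haveI : Fact p.Prime := ⟨hp⟩
  haveI : NeZero p := ⟨hp.ne_zero⟩
  -- step 1: GL set ≃ matrix set
  have e1 : {g : GL (Fin 2) (ZMod p) |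
        Matrix.trace (g : Matrix (Fin 2) (Fin 2) (ZMod p)) = T ∧
        Matrix.det (g : Matrix (Fin 2) (Fin 2) (ZMod p)) = D} ≃
      {m : Matrix (Fin 2) (Fin 2) (ZMod p) // Matrix.trace m = T ∧ Matrix.det m = D} := by
    refine ⟨fun g => ⟨(g.1 : Matrix (Fin 2) (Fin 2) (ZMod p)), g.2⟩,
      fun m => ⟨Matrix.GeneralLinearGroup.mkOfDetNeZero m.1 (by rw [m.2.2]; exact hD), m.2⟩,
      fun g => ?_, fun m => rfl⟩
    · exact Subtype.ext (Units.ext rfl)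
  -- step 2: matrix set ≃ quadruples
  have e2 : {m : Matrix (Fin 2) (Fin 2) (ZMod p) // Matrix.trace m = T ∧ Matrix.det m = D} ≃
      {x : ZMod p × ZMod p × ZMod p × ZMod p //
        x.1 + x.2.2.2 = T ∧ x.1 * x.2.2.2 - x.2.1 * x.2.2.1 = D} := by
    refine ⟨fun m => ⟨(m.1 0 0, m.1 0 1, m.1 1 0, m.1 1 1), ?_⟩,
      fun x => ⟨!![x.1.1, x.1.2.1; x.1.2.2.1, x.1.2.2.2], ?_, ?_⟩, fun m => ?_, fun x => ?_⟩
    · obtain ⟨h1, h2⟩ := m.2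
      rw [Matrix.trace_fin_two] at h1
      rw [Matrix.det_fin_two] at h2
      exact ⟨h1, h2⟩
    · rw [Matrix.trace_fin_two]; simpa using x.2.1
    · rw [Matrix.det_fin_two]; simpa using x.2.2
    · exact Subtype.ext (Matrix.eta_fin_two m.1).symm
    · exact Subtype.ext (by simp)
  -- step 3: quadruples ≃ sigma
  have e3 : {x : ZMod p × ZMod p × ZMod p × ZMod p //
        x.1 + x.2.2.2 = T ∧ x.1 * x.2.2.2 - x.2.1 * x.2.2.1 = D} ≃
      Σ a : ZMod p, {bc : ZMod p × ZMod p // bc.1 * bc.2 = a * (T - a) - D} := by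
    refine ⟨fun x => ⟨x.1.1, ⟨(x.1.2.1, x.1.2.2.1), ?_⟩⟩,
      fun y => ⟨(y.1, y.2.1.1, y.2.1.2, T - y.1), by ring, by linear_combination -y.2.2⟩,
      fun x => ?_, fun y => rfl⟩
    · obtain ⟨h1, h2⟩ := x.2
      linear_combination x.1.1 * h1 - h2
    · obtain ⟨⟨a, b, c, d⟩, h1, h2⟩ := x
      refine Subtype.ext ?_
      simp only [Prod.mk.injEq]
      exact ⟨trivial, trivial, trivial, by linear_combination -h1⟩
  -- combine
  have key : Nat.card {g : GL (Fin 2) (ZMod p) |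
        Matrix.trace (g : Matrix (Fin 2) (Fin 2) (ZMod p)) = T ∧
        Matrix.det (g : Matrix (Fin 2) (Fin 2) (ZMod p)) = D} =
      ∑ a : ZMod p, Nat.card {bc : ZMod p × ZMod p // bc.1 * bc.2 = a * (T - a) - D} := by
    rw [Nat.card_congr ((e1.trans e2).trans e3), Nat.card_eq_fintype_card,
      Fintype.card_sigma]
    simp [Nat.card_eq_fintype_card]
  rw [key]
  have hiff : ∀ a : ZMod p, (a * (T - a) - D = 0) ↔ (a ^ 2 - T * a + D = 0) :=
    fun a => ⟨fun h => by linear_combination -h, fun h => by linear_combination -h⟩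
  have hterm : ∀ a : ZMod p, Nat.card {bc : ZMod p × ZMod p // bc.1 * bc.2 = a * (T - a) - D} =
      (if a ^ 2 - T * a + D = 0 then p else 0) + (p - 1) := by
    intro a
    rw [pairs_card]
    by_cases h : a ^ 2 - T * a + D = 0
    · rw [if_pos ((hiff a).mpr h), if_pos h]
      have := hp.one_le; omega
    · rw [if_neg (fun hh => h ((hiff a).mp hh)), if_neg h]
      omega
  simp only [hterm]
  rw [Finset.sum_add_distrib, Finset.sum_const, ← Finset.sum_filter, Finset.sum_const]
  have hNf : N = (Finset.univ.filter fun a : ZMod p => a ^ 2 - T * a + D = 0).card := by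
    rw [hN, Nat.card_eq_fintype_card]
    simp [Fintype.card_subtype]
  rw [Finset.card_univ, ZMod.card, smul_eq_mul, smul_eq_mul, ← hNf]
  push_cast [Nat.cast_sub hp.one_le]
  ring
end

section
/- Let p be an odd prime, let T be an element of ℤ/pℤ, and let D be a nonzero element of ℤ/pℤ. Then the number of matrices g ∈ GL₂(ℤ/pℤ) with trace equal to T and determinant equal to D is exactly p² + p·χ(T² − 4D) (as an equality of integers), where χ is the quadratic character of the field ℤ/pℤ (so χ(0) = 0, χ(u) = 1 if u is a nonzero square, and χ(u) = −1 if u is a nonsquare). -/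
open Matrix Finset

def matEquiv (R : Type*) : ((R × R) × R × R) ≃ Matrix (Fin 2) (Fin 2) R where
  toFun x := !![x.1.1, x.1.2; x.2.1, x.2.2]
  invFun M := ((M 0 0, M 0 1), (M 1 0, M 1 1))
  left_inv x := by simp
  right_inv M := (Matrix.eta_fin_two M).symm

lemma sum_pairs (p : ℕ) [Fact p.Prime] (v : ZMod p) :
    (∑ b : ZMod p, ∑ c : ZMod p, if b * c = v then (1:ℤ) else 0)
      = ((p : ℤ) - 1) + if v = 0 then (p:ℤ) else 0 := by
  have h1 : ∀ b : ZMod p, (∑ c : ZMod p, if b * c = v then (1:ℤ) else 0)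
      = if b = 0 then (if v = 0 then (p:ℤ) else 0) else 1 := by
    intro b
    by_cases hb : b = 0
    · subst hb
      simp only [zero_mul, if_pos rfl]
      by_cases hv : v = 0
      · subst hv
        simp [ZMod.card]
      · simp [hv, Ne.symm hv]
    · have hc : ∀ c : ZMod p, (b * c = v) ↔ (c = b⁻¹ * v) := fun c =>
        (eq_inv_mul_iff_mul_eq₀ hb).symm
      simp [hc, hb]
  rw [Fintype.sum_congr _ _ h1]
  have h2 : ∀ b : ZMod p, (if b = 0 then (if v = 0 then (p:ℤ) else 0) else 1)
      = 1 + (if b = 0 then (if v = 0 then (p:ℤ) else 0) - 1 else 0) := by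
    intro b; split <;> ring
  rw [Fintype.sum_congr _ _ h2, Finset.sum_add_distrib]
  simp [Finset.sum_ite_eq', ZMod.card]
  ring

lemma card_roots (p : ℕ) [Fact p.Prime] (hp2 : p ≠ 2) (T D : ZMod p) :
    (∑ a : ZMod p, if a * (T - a) - D = 0 then (1:ℤ) else 0)
      = quadraticChar (ZMod p) (T ^ 2 - 4 * D) + 1 := by
  have hp := (Fact.out : p.Prime)
  have h2 : (2 : ZMod p) ≠ 0 := by
    intro h
    have hdvd : (p : ℕ) ∣ 2 := (ZMod.natCast_eq_zero_iff 2 p).mp (by exact_mod_cast h)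
    exact hp2 ((Nat.prime_dvd_prime_iff_eq hp Nat.prime_two).mp hdvd)
  have h4 : (4 : ZMod p) ≠ 0 := by
    have h : (4 : ZMod p) = 2 * 2 := by norm_num
    rw [h]; exact mul_ne_zero h2 h2
  have key : (∑ a : ZMod p, if a * (T - a) - D = 0 then (1:ℤ) else 0)
      = ∑ x : ZMod p, if x ^ 2 = T ^ 2 - 4 * D then (1:ℤ) else 0 := by
    refine Fintype.sum_equiv
      ⟨fun a => 2 * a - T, fun x => (x + T) / 2,
        fun a => by field_simp; ring, fun x => by field_simp; ring⟩ _ _ fun a => ?_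
    show (if a * (T - a) - D = 0 then (1:ℤ) else 0)
      = if (2 * a - T) ^ 2 = T ^ 2 - 4 * D then (1:ℤ) else 0
    refine if_congr ?_ rfl rfl
    constructor
    · intro h; linear_combination -4 * h
    · intro h
      have h4' : (4 : ZMod p) * (a * (T - a) - D) = 0 := by linear_combination -h
      rcases mul_eq_zero.mp h4' with h' | h'
      · exact absurd h' h4
      · exact h'
  rw [key, Finset.sum_boole]
  have hchar : ringChar (ZMod p) ≠ 2 := by
    rw [ZMod.ringChar_zmod_n]; exact hp2
  have hq := quadraticChar_card_sqrts hchar (T ^ 2 - 4 * D)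
  rw [Set.toFinset_setOf] at hq
  rw [← hq]

theorem stmt_1 (p : ℕ) [Fact p.Prime] (hp2 : p ≠ 2) (T D : ZMod p) (hD : D ≠ 0) :
    (Nat.card {g : GL (Fin 2) (ZMod p) |
        Matrix.trace (g : Matrix (Fin 2) (Fin 2) (ZMod p)) = T ∧
        Matrix.det (g : Matrix (Fin 2) (Fin 2) (ZMod p)) = D} : ℤ) =
      (p : ℤ) ^ 2 + (p : ℤ) * quadraticChar (ZMod p) (T ^ 2 - 4 * D) := by
  -- Step 1: transfer from GL to matrices
  have e1 : {g : GL (Fin 2) (ZMod p) |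
        Matrix.trace (g : Matrix (Fin 2) (Fin 2) (ZMod p)) = T ∧
        Matrix.det (g : Matrix (Fin 2) (Fin 2) (ZMod p)) = D} ≃
      {M : Matrix (Fin 2) (Fin 2) (ZMod p) // Matrix.trace M = T ∧ Matrix.det M = D} := by
    have hu : ∀ M : {M : Matrix (Fin 2) (Fin 2) (ZMod p) //
        Matrix.trace M = T ∧ Matrix.det M = D}, IsUnit M.1 := fun M =>
      (Matrix.isUnit_iff_isUnit_det M.1).mpr (isUnit_iff_ne_zero.mpr (by rw [M.2.2]; exact hD))
    exact
      { toFun := fun g => ⟨(g.1 : Matrix (Fin 2) (Fin 2) (ZMod p)), g.2⟩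
        invFun := fun M => ⟨(hu M).unit, by
          simp only [Set.mem_setOf_eq]
          constructor <;> rw [(hu M).unit_spec]
          exacts [M.2.1, M.2.2]⟩
        left_inv := fun g => by
          refine Subtype.ext (Units.ext ?_)
          exact (hu _).unit_spec
        right_inv := fun M => by
          refine Subtype.ext ?_
          exact (hu _).unit_spec }
  rw [Nat.card_congr e1, Nat.card_eq_fintype_card, Fintype.card_subtype]
  push_cast [Finset.card_filter]
  rw [← Fintype.sum_equiv (matEquiv (ZMod p))
      (fun x : (ZMod p × ZMod p) × ZMod p × ZMod p =>
        if Matrix.trace (matEquiv (ZMod p) x) = T ∧ Matrix.det (matEquiv (ZMod p) x) = D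
        then (1:ℤ) else 0) _ (fun x => rfl)]
  have hcond : ∀ x : (ZMod p × ZMod p) × ZMod p × ZMod p,
      (Matrix.trace (matEquiv (ZMod p) x) = T ∧ Matrix.det (matEquiv (ZMod p) x) = D)
        ↔ (x.2.2 = T - x.1.1 ∧ x.1.2 * x.2.1 = x.1.1 * (T - x.1.1) - D) := by
    intro x
    obtain ⟨⟨a, b⟩, c, d⟩ := x
    simp only [matEquiv, Equiv.coe_fn_mk, Matrix.trace_fin_two_of, Matrix.det_fin_two_of]
    constructor
    · rintro ⟨hh1, hh2⟩
      have hd : d = T - a := by linear_combination hh1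
      subst hd
      exact ⟨rfl, by linear_combination -hh2⟩
    · rintro ⟨hh1, hh2⟩
      subst hh1
      exact ⟨by ring, by linear_combination -hh2⟩
  simp only [hcond]
  rw [Fintype.sum_prod_type]
  simp only [Fintype.sum_prod_type]
  have inner : ∀ a b c : ZMod p,
      (∑ d : ZMod p, if d = T - a ∧ b * c = a * (T - a) - D then (1:ℤ) else 0)
        = if b * c = a * (T - a) - D then (1:ℤ) else 0 := by
    intro a b c
    simp [ite_and, Finset.sum_ite_eq']
  simp only [inner]
  have step : ∀ a : ZMod p,
      (∑ b : ZMod p, ∑ c : ZMod p, if b * c = a * (T - a) - D then (1:ℤ) else 0)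
        = ((p : ℤ) - 1) + if a * (T - a) - D = 0 then (p:ℤ) else 0 := by
    intro a; exact sum_pairs p _
  simp only [step]
  rw [Finset.sum_add_distrib]
  have : (∑ a : ZMod p, if a * (T - a) - D = 0 then (p:ℤ) else 0)
      = (p:ℤ) * ∑ a : ZMod p, if a * (T - a) - D = 0 then (1:ℤ) else 0 := by
    rw [Finset.mul_sum]
    refine Finset.sum_congr rfl fun a _ => ?_
    split <;> ring
  rw [this, card_roots p hp2 T D]
  simp only [Finset.sum_const, Finset.card_univ, ZMod.card, nsmul_eq_mul]

  ring
end

section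
/- Let f(x,y) ∈ ℤ[x,y] be a squarefree, non-constant polynomial in two variables. Then there exists a constant C > 0 (depending only on f) such that for every prime p, the number of matrices g ∈ GL₂(ℤ/pℤ) with f(tr g, det g) ≡ 0 (mod p) is at most C·p³. -/
set_option linter.unusedSectionVars false
set_option linter.unusedVariables false
set_option maxHeartbeats 1000000

open Matrix MvPolynomial Finset

section Aux

variable {F : Type*} [Field F] [Fintype F] [DecidableEq F]

private lemma gl_eq_of_entries {g g' : GL (Fin 2) F}
    (h00 : (g : Matrix (Fin 2) (Fin 2) F) 0 0 = (g' : Matrix (Fin 2) (Fin 2) F) 0 0)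
    (h01 : (g : Matrix (Fin 2) (Fin 2) F) 0 1 = (g' : Matrix (Fin 2) (Fin 2) F) 0 1)
    (h10 : (g : Matrix (Fin 2) (Fin 2) F) 1 0 = (g' : Matrix (Fin 2) (Fin 2) F) 1 0)
    (h11 : (g : Matrix (Fin 2) (Fin 2) F) 1 1 = (g' : Matrix (Fin 2) (Fin 2) F) 1 1) :
    g = g' := by
  apply Units.ext
  ext i j
  fin_cases i <;> fin_cases j <;> assumption

lemma det_coe_ne_zero (g : GL (Fin 2) F) : (g : Matrix (Fin 2) (Fin 2) F).det ≠ 0 :=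
  (Matrix.isUnits_det_units g).ne_zero

lemma fiber_card (t d : F) :
    (univ.filter (fun g : GL (Fin 2) F =>
      Matrix.trace (g : Matrix (Fin 2) (Fin 2) F) = t ∧
      Matrix.det (g : Matrix (Fin 2) (Fin 2) F) = d)).card
    ≤ 2 * Fintype.card F ^ 2 := by
  have h : (univ.filter (fun g : GL (Fin 2) F =>
      Matrix.trace (g : Matrix (Fin 2) (Fin 2) F) = t ∧
      Matrix.det (g : Matrix (Fin 2) (Fin 2) F) = d)).card
      ≤ (univ : Finset (F × (F ⊕ F))).card := by
    apply Finset.card_le_card_of_injOn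
      (fun g : GL (Fin 2) F =>
        ((g : Matrix (Fin 2) (Fin 2) F) 0 0,
          if (g : Matrix (Fin 2) (Fin 2) F) 0 1 = 0
          then Sum.inr ((g : Matrix (Fin 2) (Fin 2) F) 1 0)
          else Sum.inl ((g : Matrix (Fin 2) (Fin 2) F) 0 1)))
      (fun _ _ => mem_univ _)
    intro g hg g' hg' hEq
    simp only [coe_filter, Set.mem_setOf_eq, mem_univ, true_and] at hg hg'
    obtain ⟨htr, hdet⟩ := hg
    obtain ⟨htr', hdet'⟩ := hg'
    rw [Matrix.trace_fin_two] at htr htr'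
    rw [Matrix.det_fin_two] at hdet hdet'
    simp only [Prod.mk.injEq] at hEq
    obtain ⟨h1, h2⟩ := hEq
    have h11 : (g : Matrix (Fin 2) (Fin 2) F) 1 1 = (g' : Matrix (Fin 2) (Fin 2) F) 1 1 := by
      have := htr.trans htr'.symm
      rw [h1] at this
      exact add_left_cancel this
    by_cases hb : (g : Matrix (Fin 2) (Fin 2) F) 0 1 = 0 <;>
      by_cases hb' : (g' : Matrix (Fin 2) (Fin 2) F) 0 1 = 0 <;>
      simp only [hb, hb', if_true, if_false, if_pos, if_neg, reduceIte] at h2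
    · exact gl_eq_of_entries h1 (hb.trans hb'.symm) (Sum.inr_injective h2) h11
    · exact absurd h2 (by simp)
    · exact absurd h2 (by simp)
    · have hbb : (g : Matrix (Fin 2) (Fin 2) F) 0 1 = (g' : Matrix (Fin 2) (Fin 2) F) 0 1 :=
        Sum.inl_injective h2
      refine gl_eq_of_entries h1 hbb ?_ h11
      have : (g : Matrix (Fin 2) (Fin 2) F) 0 1 * (g : Matrix (Fin 2) (Fin 2) F) 1 0
           = (g' : Matrix (Fin 2) (Fin 2) F) 0 1 * (g' : Matrix (Fin 2) (Fin 2) F) 1 0 := by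
        have := hdet.trans hdet'.symm
        rw [h1, h11] at this
        linear_combination -this
      rw [hbb] at this
      exact mul_left_cancel₀ hb' this
  refine h.trans ?_
  simp only [card_univ, Fintype.card_prod, Fintype.card_sum]
  ring_nf
  omega

lemma det_fiber_card (d : F) :
    (univ.filter (fun g : GL (Fin 2) F =>
      Matrix.det (g : Matrix (Fin 2) (Fin 2) F) = d)).card
    ≤ 2 * Fintype.card F ^ 3 := by
  by_cases hd : d = 0
  · have : (univ.filter (fun g : GL (Fin 2) F =>
        Matrix.det (g : Matrix (Fin 2) (Fin 2) F) = d)) = ∅ := by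
      refine Finset.filter_false_of_mem ?_
      intro g _
      rw [hd]
      exact (Matrix.isUnits_det_units g).ne_zero
    rw [this]
    positivity
  have h : (univ.filter (fun g : GL (Fin 2) F =>
      Matrix.det (g : Matrix (Fin 2) (Fin 2) F) = d)).card
      ≤ (univ : Finset ((F × F × F) ⊕ (F × F × F))).card := by
    apply Finset.card_le_card_of_injOn
      (fun g : GL (Fin 2) F =>
        if (g : Matrix (Fin 2) (Fin 2) F) 0 1 = 0
        then Sum.inr ((g : Matrix (Fin 2) (Fin 2) F) 0 0,
              (g : Matrix (Fin 2) (Fin 2) F) 1 0, 0)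
        else Sum.inl ((g : Matrix (Fin 2) (Fin 2) F) 0 0,
              (g : Matrix (Fin 2) (Fin 2) F) 0 1,
              (g : Matrix (Fin 2) (Fin 2) F) 1 1))
      (fun _ _ => mem_univ _)
    intro g hg g' hg' hEq
    simp only [coe_filter, Set.mem_setOf_eq, mem_univ, true_and] at hg hg'
    rw [Matrix.det_fin_two] at hg hg'
    by_cases hb : (g : Matrix (Fin 2) (Fin 2) F) 0 1 = 0 <;>
      by_cases hb' : (g' : Matrix (Fin 2) (Fin 2) F) 0 1 = 0 <;>
      simp only [hb, hb', if_true, if_false, reduceIte, Sum.inr.injEq, Sum.inl.injEq,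
        Prod.mk.injEq] at hEq
    · -- both 0 1 entries zero
      obtain ⟨h00, h10, -⟩ := hEq
      have ha : (g : Matrix (Fin 2) (Fin 2) F) 0 0 ≠ 0 := by
        intro h0
        rw [h0, hb] at hg
        simp at hg
        exact hd hg.symm
      have h11 : (g : Matrix (Fin 2) (Fin 2) F) 1 1 = (g' : Matrix (Fin 2) (Fin 2) F) 1 1 := by
        apply mul_left_cancel₀ ha
        rw [hb] at hg; rw [hb'] at hg'
        simp only [zero_mul, sub_zero] at hg hg'
        rw [hg, h00, hg']
      exact gl_eq_of_entries h00 (hb.trans hb'.symm) h10 h11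
    · exact absurd hEq (by simp)
    · exact absurd hEq (by simp)
    · obtain ⟨h00, h01, h11⟩ := hEq
      have h10 : (g : Matrix (Fin 2) (Fin 2) F) 1 0 = (g' : Matrix (Fin 2) (Fin 2) F) 1 0 := by
        apply mul_left_cancel₀ hb
        rw [h01]
        have := hg.trans hg'.symm
        rw [h00, h11, h01] at this
        linear_combination -this
      exact gl_eq_of_entries h00 h01 h10 h11
  refine h.trans ?_
  simp only [card_univ, Fintype.card_sum, Fintype.card_prod]
  ring_nf
  omega

lemma onevar_card (g : MvPolynomial (Fin 1) F) (hg : g ≠ 0) :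
    (univ.filter (fun d : F => eval ![d] g = 0)).card ≤ degreeOf 0 g := by
  set g₁ := finSuccEquiv F 0 g with hg₁
  set h := Polynomial.map (eval (![] : Fin 0 → F)) g₁ with hh
  have key : ∀ d : F, eval ![d] g = h.eval d := by
    intro d
    exact eval_eq_eval_mv_eval' (![] : Fin 0 → F) d g
  have hinj : Function.Injective (eval (![] : Fin 0 → F)) := by
    intro a b hab
    obtain ⟨a', rfl⟩ := MvPolynomial.C_surjective (Fin 0) a
    obtain ⟨b', rfl⟩ := MvPolynomial.C_surjective (Fin 0) b
    simp only [eval_C] at hab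
    rw [hab]
  have hne : h ≠ 0 := by
    intro h0
    apply hg
    have hg1 : g₁ = 0 := Polynomial.map_injective _ hinj (by simpa using h0)
    exact (EmbeddingLike.map_eq_zero_iff (f := finSuccEquiv F 0)).1 hg1
  have hsub : (univ.filter (fun d : F => eval ![d] g = 0)) ⊆ h.roots.toFinset := by
    intro d hd
    rw [mem_filter] at hd
    rw [Multiset.mem_toFinset, Polynomial.mem_roots hne]
    rw [Polynomial.IsRoot, ← key d]
    exact hd.2
  refine (Finset.card_le_card hsub).trans ?_
  refine (Multiset.toFinset_card_le _).trans ?_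
  refine (Polynomial.card_roots' h).trans ?_
  refine Polynomial.natDegree_map_le.trans ?_
  rw [hg₁, natDegree_finSuccEquiv]

lemma totalDegree_map_le' {R S : Type*} [CommSemiring R] [CommSemiring S] {σ : Type*}
    (φ : R →+* S) (f : MvPolynomial σ R) : (map φ f).totalDegree ≤ f.totalDegree :=
  Finset.sup_mono (support_map_subset φ f)

lemma good_count (f : MvPolynomial (Fin 2) ℤ)
    (hf : MvPolynomial.map (Int.castRingHom F) f ≠ 0) :
    (univ.filter (fun g : GL (Fin 2) F =>
      aeval ![Matrix.trace (g : Matrix (Fin 2) (Fin 2) F),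
              Matrix.det (g : Matrix (Fin 2) (Fin 2) F)] f = 0)).card
    ≤ 4 * f.totalDegree * Fintype.card F ^ 3 := by
  classical
  set q := Fintype.card F with hq
  set D := f.totalDegree with hD
  set fbar := MvPolynomial.map (Int.castRingHom F) f with hfbar
  set P := finSuccEquiv F 1 fbar with hPdef
  have hP : P ≠ 0 := fun h0 => hf ((EmbeddingLike.map_eq_zero_iff).1 h0)
  have keval : ∀ t d : F,
      aeval ![t, d] f = Polynomial.eval t (Polynomial.map (eval ![d]) P) := by
    intro t d
    rw [aeval_def, eval₂_eq_eval_map]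
    exact eval_eq_eval_mv_eval' ![d] t fbar
  have hdegP : P.natDegree ≤ D := by
    rw [hPdef, natDegree_finSuccEquiv]
    exact (degreeOf_le_totalDegree fbar 0).trans (totalDegree_map_le' _ f)
  set lead := P.coeff P.natDegree with hleaddef
  have hlead : lead ≠ 0 := by
    rw [hleaddef, ← Polynomial.leadingCoeff]
    exact Polynomial.leadingCoeff_ne_zero.2 hP
  have hdlead : degreeOf 0 lead ≤ D := by
    refine (degreeOf_coeff_finSuccEquiv fbar 0 P.natDegree).trans ?_
    exact (degreeOf_le_totalDegree fbar _).trans (totalDegree_map_le' _ f)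
  set Bad := univ.filter (fun d : F => Polynomial.map (eval ![d]) P = 0) with hBadDef
  have hBad : Bad.card ≤ D := by
    refine le_trans (Finset.card_le_card ?_) ((onevar_card lead hlead).trans hdlead)
    intro d hd
    rw [hBadDef, mem_filter] at hd
    rw [mem_filter]
    refine ⟨mem_univ _, ?_⟩
    have := congrArg (fun Q => Polynomial.coeff Q P.natDegree) hd.2
    rw [hleaddef]
    simpa [Polynomial.coeff_map] using this
  set S := univ.filter (fun g : GL (Fin 2) F =>
      aeval ![Matrix.trace (g : Matrix (Fin 2) (Fin 2) F),
              Matrix.det (g : Matrix (Fin 2) (Fin 2) F)] f = 0) with hSdef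
  have hsplit : S.card = ∑ d : F,
      (S.filter (fun g : GL (Fin 2) F =>
        Matrix.det (g : Matrix (Fin 2) (Fin 2) F) = d)).card :=
    Finset.card_eq_sum_card_fiberwise (fun g _ => mem_univ _)
  have hterm : ∀ d : F,
      (S.filter (fun g : GL (Fin 2) F =>
        Matrix.det (g : Matrix (Fin 2) (Fin 2) F) = d)).card ≤
      (if Polynomial.map (eval ![d]) P = 0 then 2*q^3 else 0) + 2*D*q^2 := by
    intro d
    by_cases hbad : Polynomial.map (eval ![d]) P = 0
    · rw [if_pos hbad]
      have hsub : S.filter (fun g : GL (Fin 2) F =>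
          Matrix.det (g : Matrix (Fin 2) (Fin 2) F) = d) ⊆
          univ.filter (fun g : GL (Fin 2) F =>
            Matrix.det (g : Matrix (Fin 2) (Fin 2) F) = d) := by
        intro g hg
        rw [mem_filter] at hg ⊢
        exact ⟨mem_univ _, hg.2⟩
      refine le_trans (le_trans (Finset.card_le_card hsub)
        (by rw [hq]; exact det_fiber_card d)) (Nat.le_add_right _ _)
    · rw [if_neg hbad, zero_add]
      set Qd := Polynomial.map (eval ![d]) P with hQd
      set T := S.filter (fun g : GL (Fin 2) F =>
        Matrix.det (g : Matrix (Fin 2) (Fin 2) F) = d) with hT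
      have hroots : ∀ g ∈ T,
          Matrix.trace (g : Matrix (Fin 2) (Fin 2) F) ∈ Qd.roots.toFinset := by
        intro g hg
        rw [hT, mem_filter, hSdef, mem_filter] at hg
        rw [Multiset.mem_toFinset, Polynomial.mem_roots hbad, Polynomial.IsRoot, ← keval]
        rw [← hg.2]
        exact hg.1.2
      rw [Finset.card_eq_sum_card_fiberwise hroots]
      have h1 : ∀ t ∈ Qd.roots.toFinset,
          (T.filter (fun g : GL (Fin 2) F =>
            Matrix.trace (g : Matrix (Fin 2) (Fin 2) F) = t)).card ≤ 2*q^2 := by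
        intro t _
        refine le_trans (Finset.card_le_card ?_) (by rw [hq]; exact fiber_card t d)
        intro g hg
        rw [mem_filter, hT, mem_filter] at hg
        rw [mem_filter]
        exact ⟨mem_univ _, hg.2, hg.1.2⟩
      refine le_trans (Finset.sum_le_sum h1) ?_
      rw [Finset.sum_const, smul_eq_mul]
      have h2 : Qd.roots.toFinset.card ≤ D := by
        refine le_trans (Multiset.toFinset_card_le _) ?_
        refine le_trans (Polynomial.card_roots' Qd) ?_
        exact le_trans Polynomial.natDegree_map_le hdegP
      calc Qd.roots.toFinset.card * (2*q^2) ≤ D * (2*q^2) := Nat.mul_le_mul_right _ h2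
        _ = 2*D*q^2 := by ring
  calc S.card = _ := hsplit
    _ ≤ ∑ d : F, ((if Polynomial.map (eval ![d]) P = 0 then 2*q^3 else 0) + 2*D*q^2) :=
        Finset.sum_le_sum (fun d _ => hterm d)
    _ = Bad.card * (2*q^3) + q * (2*D*q^2) := by
        rw [Finset.sum_add_distrib, Finset.sum_const, ← Finset.sum_filter, Finset.sum_const]
        simp [hBadDef, card_univ, hq]
    _ ≤ D * (2*q^3) + q * (2*D*q^2) :=
        Nat.add_le_add_right (Nat.mul_le_mul_right _ hBad) _
    _ = 4 * D * q^3 := by ring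

end Aux

theorem stmt_4 (f : MvPolynomial (Fin 2) ℤ) (hsf : Squarefree f)
    (hnc : 1 ≤ f.totalDegree) :
    ∃ C : ℝ, 0 < C ∧ ∀ p : ℕ, p.Prime →
      (Nat.card {g : GL (Fin 2) (ZMod p) |
          MvPolynomial.aeval
            ![Matrix.trace (g : Matrix (Fin 2) (Fin 2) (ZMod p)),
              Matrix.det (g : Matrix (Fin 2) (Fin 2) (ZMod p))] f = 0} : ℝ) ≤
        C * (p : ℝ) ^ 3 := by
  classical
  have hf0 : f ≠ 0 := by
    intro h
    rw [h, totalDegree_zero] at hnc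
    omega
  obtain ⟨m, hm⟩ : ∃ m, coeff m f ≠ 0 := by
    by_contra h
    push_neg at h
    exact hf0 (MvPolynomial.ext _ _ (fun m => by simp [h m]))
  set N := (coeff m f).natAbs with hNdef
  have hN : 0 < N := Int.natAbs_pos.2 hm
  set D := f.totalDegree with hD
  refine ⟨((4 * D + N + 1 : ℕ) : ℝ), by positivity, ?_⟩
  intro p hp
  haveI : Fact p.Prime := ⟨hp⟩
  have key : Nat.card {g : GL (Fin 2) (ZMod p) |
      MvPolynomial.aeval
        ![Matrix.trace (g : Matrix (Fin 2) (Fin 2) (ZMod p)),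
          Matrix.det (g : Matrix (Fin 2) (Fin 2) (ZMod p))] f = 0} ≤
      (4 * D + N + 1) * p ^ 3 := by
    have hcard : Nat.card {g : GL (Fin 2) (ZMod p) |
        MvPolynomial.aeval
          ![Matrix.trace (g : Matrix (Fin 2) (Fin 2) (ZMod p)),
            Matrix.det (g : Matrix (Fin 2) (Fin 2) (ZMod p))] f = 0} =
        (univ.filter (fun g : GL (Fin 2) (ZMod p) =>
          MvPolynomial.aeval
            ![Matrix.trace (g : Matrix (Fin 2) (Fin 2) (ZMod p)),
              Matrix.det (g : Matrix (Fin 2) (Fin 2) (ZMod p))] f = 0)).card := by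
      rw [Nat.card_eq_fintype_card]
      exact Fintype.card_subtype _
    rw [hcard]
    by_cases hgood : MvPolynomial.map (Int.castRingHom (ZMod p)) f ≠ 0
    · refine le_trans (good_count f hgood) ?_
      rw [ZMod.card]
      exact Nat.mul_le_mul_right _ (by omega)
    · push_neg at hgood
      have hpN : p ≤ N := by
        have hdvd : (p : ℤ) ∣ coeff m f := by
          have : coeff m (MvPolynomial.map (Int.castRingHom (ZMod p)) f) = 0 := by
            rw [hgood]; simp
          rw [coeff_map] at this
          exact (ZMod.intCast_zmod_eq_zero_iff_dvd _ _).1 this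
        exact Nat.le_of_dvd hN (Int.natCast_dvd.mp hdvd)
      have h1 : (univ.filter (fun g : GL (Fin 2) (ZMod p) =>
          MvPolynomial.aeval
            ![Matrix.trace (g : Matrix (Fin 2) (Fin 2) (ZMod p)),
              Matrix.det (g : Matrix (Fin 2) (Fin 2) (ZMod p))] f = 0)).card ≤
          Fintype.card (GL (Fin 2) (ZMod p)) := by
        rw [← card_univ]
        exact Finset.card_le_card (subset_univ _)
      have h2 : Fintype.card (GL (Fin 2) (ZMod p)) ≤ p ^ 4 := by
        have := Fintype.card_le_of_injective
          (fun g : GL (Fin 2) (ZMod p) => (g : Matrix (Fin 2) (Fin 2) (ZMod p)))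
          (fun a b hab => Units.ext hab)
        refine this.trans ?_
        have : Fintype.card (Matrix (Fin 2) (Fin 2) (ZMod p)) = p ^ 4 := by
          have e : Fintype.card (Matrix (Fin 2) (Fin 2) (ZMod p))
              = Fintype.card (Fin 2 → Fin 2 → ZMod p) := rfl
          rw [e]
          simp [Fintype.card_fun, ZMod.card]
          ring
        omega
      refine (h1.trans h2).trans ?_
      have : p ^ 4 = p * p ^ 3 := by ring
      rw [this]
      refine Nat.mul_le_mul_right _ (by omega)
  calc (Nat.card {g : GL (Fin 2) (ZMod p) |
      MvPolynomial.aeval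
        ![Matrix.trace (g : Matrix (Fin 2) (Fin 2) (ZMod p)),
          Matrix.det (g : Matrix (Fin 2) (Fin 2) (ZMod p))] f = 0} : ℝ)
      ≤ (((4 * D + N + 1) * p ^ 3 : ℕ) : ℝ) := by exact_mod_cast key
    _ = ((4 * D + N + 1 : ℕ) : ℝ) * (p : ℝ) ^ 3 := by push_cast; ring
end

section
/- Let f(x,y) ∈ ℤ[x,y] be a squarefree polynomial in two variables. Then there exists a constant C > 0 (depending only on f) such that for every prime p, the number of pairs (T, D) ∈ (ℤ/pℤ)² satisfying f(T,D) ≡ 0, (∂f/∂x)(T,D) ≡ 0, and (∂f/∂y)(T,D) ≡ 0 (all mod p) is at most C. -/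
open Polynomial MvPolynomial
open scoped nonZeroDivisors

theorem squarefree_mulEquiv {A B : Type*} [CommMonoid A] [CommMonoid B] (e : A ≃* B)
    {a : A} (ha : Squarefree a) : Squarefree (e a) := by
  intro y hy
  have : e.symm y * e.symm y ∣ a := by
    have := map_dvd e.symm hy
    simpa using this
  have := ha _ this
  have := this.map e.toMonoidHom
  simpa using this

theorem squarefree_map_fractionRing {R : Type*} [CommRing R] [IsDomain R]
    [NormalizedGCDMonoid R] {q : R[X]} (hq : Squarefree q) :
    Squarefree (q.map (algebraMap R (FractionRing R))) := by
  set K := FractionRing R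
  have inj : Function.Injective (algebraMap R K) := IsFractionRing.injective R K
  have q0 : q ≠ 0 := hq.ne_zero
  have Q0 : q.map (algebraMap R K) ≠ 0 := by
    simpa [Polynomial.map_eq_zero_iff inj] using q0
  rw [squarefree_iff_no_irreducibles Q0]
  rintro π hπ hdvd
  have π0 : π ≠ 0 := hπ.ne_zero
  set n := IsLocalization.integerNormalization R⁰ π with hn
  obtain ⟨c, hc⟩ := IsLocalization.integerNormalization_map_to_map R⁰ π
  have n0 : n ≠ 0 := fun h => π0 (IsFractionRing.integerNormalization_eq_zero_iff.mp h)
  set P := n.primPart with hP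
  have hPprim : P.IsPrimitive := n.isPrimitive_primPart
  -- map P is associated to π
  have hassoc : Associated (P.map (algebraMap R K)) π := by
    have h1 : n.map (algebraMap R K) = Polynomial.C ((algebraMap R K) c) * π := by
      rw [hc, Algebra.smul_def, Polynomial.algebraMap_apply]
    have h2 : n.map (algebraMap R K) = Polynomial.C ((algebraMap R K) n.content) * P.map (algebraMap R K) := by
      conv_lhs => rw [n.eq_C_content_mul_primPart]
      simp [Polynomial.map_mul, hP]
    have hcne : (algebraMap R K) c ≠ 0 := by
      simpa [map_eq_zero_iff _ inj] using nonZeroDivisors.coe_ne_zero c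
    have hcontne : (algebraMap R K) n.content ≠ 0 := by
      simp only [Ne, map_eq_zero_iff _ inj, content_eq_zero_iff]
      exact n0
    have heq : Polynomial.C ((algebraMap R K) n.content) * P.map (algebraMap R K)
        = Polynomial.C ((algebraMap R K) c) * π := by rw [← h2, h1]
    have u1 : IsUnit (Polynomial.C ((algebraMap R K) n.content)) := Polynomial.isUnit_C.mpr (isUnit_iff_ne_zero.mpr hcontne)
    have u2 : IsUnit (Polynomial.C ((algebraMap R K) c)) := Polynomial.isUnit_C.mpr (isUnit_iff_ne_zero.mpr hcne)
    obtain ⟨w1, hw1⟩ := u1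
    obtain ⟨w2, hw2⟩ := u2
    refine ⟨w2⁻¹ * w1, ?_⟩
    calc P.map (algebraMap R K) * ↑(w2⁻¹ * w1)
        = ↑w2⁻¹ * (↑w1 * P.map (algebraMap R K)) := by
          rw [Units.val_mul]; ring
      _ = ↑w2⁻¹ * (↑w2 * π) := by rw [hw1, hw2, heq]
      _ = π := by rw [← mul_assoc, ← Units.val_mul, inv_mul_cancel, Units.val_one, one_mul]
  -- now (map P)^2 divides map q, descend to R[X]
  have hd1 : (P * P).map (algebraMap R K) ∣ q.map (algebraMap R K) := by
    rw [Polynomial.map_mul]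
    exact (hassoc.mul_mul hassoc).dvd.trans hdvd
  have hd2 : (P * P).map (algebraMap R K) ∣ (q.primPart).map (algebraMap R K) := by
    have e : q.map (algebraMap R K)
        = Polynomial.C ((algebraMap R K) q.content) * q.primPart.map (algebraMap R K) := by
      conv_lhs => rw [q.eq_C_content_mul_primPart]
      simp [Polynomial.map_mul]
    have hu : IsUnit (Polynomial.C ((algebraMap R K) q.content)) := by
      refine Polynomial.isUnit_C.mpr (isUnit_iff_ne_zero.mpr ?_)
      simp only [Ne, map_eq_zero_iff _ inj, content_eq_zero_iff]
      exact q0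
    rw [e, IsUnit.dvd_mul_left hu] at hd1
    exact hd1
  have hPP : P * P ∣ q.primPart :=
    (hPprim.mul hPprim).dvd_of_fraction_map_dvd_fraction_map hd2
  have hPq : P * P ∣ q := hPP.trans q.primPart_dvd
  have hPu : IsUnit P := hq P hPq
  have : IsUnit π :=
    hassoc.isUnit (hPu.map (Polynomial.mapRingHom (algebraMap R K)))
  exact hπ.not_isUnit this

theorem exists_bezout_aux {R : Type*} [CommRing R] [IsDomain R] [NormalizedGCDMonoid R]
    [CharZero R] {q : R[X]}
    (hQ : Squarefree (q.map (algebraMap R (FractionRing R)))) :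
    ∃ u v : R[X], ∃ a : R, a ≠ 0 ∧ u * q + v * derivative q = Polynomial.C a := by
  set K := FractionRing R
  have inj : Function.Injective (algebraMap R K) := IsFractionRing.injective R K
  have hsep : (q.map (algebraMap R K)).Separable :=
    PerfectField.separable_iff_squarefree.mpr hQ
  obtain ⟨U, V, hUV⟩ := hsep
  obtain ⟨c, hc⟩ := IsLocalization.integerNormalization_map_to_map R⁰ U
  obtain ⟨d, hd⟩ := IsLocalization.integerNormalization_map_to_map R⁰ V
  refine ⟨Polynomial.C (d : R) * IsLocalization.integerNormalization R⁰ U,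
      Polynomial.C (c : R) * IsLocalization.integerNormalization R⁰ V, (c : R) * (d : R),
      mul_ne_zero (nonZeroDivisors.coe_ne_zero c) (nonZeroDivisors.coe_ne_zero d), ?_⟩
  apply Polynomial.map_injective (algebraMap R K) inj
  rw [Polynomial.map_add, Polynomial.map_mul, Polynomial.map_mul, Polynomial.map_mul,
    Polynomial.map_mul, hc, hd, Polynomial.map_C, Polynomial.map_C, ← Polynomial.derivative_map]
  rw [Algebra.smul_def, Algebra.smul_def, Polynomial.algebraMap_apply, Polynomial.algebraMap_apply]
  rw [map_mul]
  calc Polynomial.C ((algebraMap R K) ↑d) * (Polynomial.C ((algebraMap R K) ↑c) * U) * map (algebraMap R K) q +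
      Polynomial.C ((algebraMap R K) ↑c) * (Polynomial.C ((algebraMap R K) ↑d) * V) * derivative (map (algebraMap R K) q)
      = Polynomial.C ((algebraMap R K) ↑c) * Polynomial.C ((algebraMap R K) ↑d) *
        (U * map (algebraMap R K) q + V * derivative (map (algebraMap R K) q)) := by ring
    _ = Polynomial.C ((algebraMap R K) ↑c) * Polynomial.C ((algebraMap R K) ↑d) := by rw [hUV, mul_one]
    _ = Polynomial.C ((algebraMap R K) ↑c * (algebraMap R K) ↑d) := by rw [map_mul]
    _ = Polynomial.map (algebraMap R K) (Polynomial.C ↑c * Polynomial.C ↑d) := by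
        rw [Polynomial.map_mul, Polynomial.map_C, Polynomial.map_C, map_mul]



noncomputable def e₁ : MvPolynomial (Fin 1) ℤ ≃ₐ[ℤ] Polynomial ℤ :=
  (MvPolynomial.renameEquiv ℤ ((Equiv.equivPUnit (Fin 1)) : Fin 1 ≃ PUnit.{1})).trans
    (MvPolynomial.pUnitAlgEquiv ℤ)

noncomputable def φ : MvPolynomial (Fin 2) ℤ ≃ₐ[ℤ] Polynomial (Polynomial ℤ) :=
  (MvPolynomial.finSuccEquiv ℤ 1).trans (Polynomial.mapAlgEquiv e₁)

theorem φ_X0 : φ (X 0) = Polynomial.X := by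
  simp [φ, Polynomial.mapAlgEquiv, finSuccEquiv_X_zero]

theorem φ_X1 : φ (X 1) = Polynomial.C Polynomial.X := by
  have h1 : (1 : Fin 2) = Fin.succ 0 := rfl
  rw [φ]
  simp only [AlgEquiv.trans_apply, h1, finSuccEquiv_X_succ]
  rw [Polynomial.coe_mapAlgEquiv, Polynomial.map_C]
  congr 1
  have : e₁ (X 0) = (MvPolynomial.pUnitAlgEquiv ℤ)
      ((MvPolynomial.renameEquiv ℤ ((Equiv.equivPUnit (Fin 1)) : Fin 1 ≃ PUnit.{1})) (X 0)) := rfl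
  show e₁ (X 0) = Polynomial.X
  rw [this]
  simp

theorem φ_C (a : ℤ) : φ (MvPolynomial.C a) = Polynomial.C (Polynomial.C a) := by
  simp [φ, Polynomial.mapAlgEquiv]

theorem φ_Xi_deriv (i : Fin 2) :
    Polynomial.derivative (φ (X i)) = φ (pderiv 0 (X i)) := by
  rcases Fin.exists_fin_two.mp ⟨i, rfl⟩ with h | h <;> subst h
  · rw [φ_X0, pderiv_X_self]
    simp [φ_C]
  · rw [φ_X1]
    simp [pderiv_X]

theorem φ_deriv (f : MvPolynomial (Fin 2) ℤ) :
    Polynomial.derivative (φ f) = φ (pderiv 0 f) := by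
  induction f using MvPolynomial.induction_on with
  | C a => simp [φ_C]
  | add p q hp hq => simp [map_add, hp, hq]
  | mul_X p i hp =>
    rw [map_mul, Polynomial.derivative_mul, hp, φ_Xi_deriv, ← map_mul, ← map_mul, ← map_add]
    congr 1
    rw [(pderiv 0).leibniz]
    rw [smul_eq_mul, smul_eq_mul]
    ring

theorem φ_polyC (a : Polynomial ℤ) :
    φ (Polynomial.aeval (X 1 : MvPolynomial (Fin 2) ℤ) a) = Polynomial.C a := by
  have : φ.toAlgHom.comp (Polynomial.aeval (X 1 : MvPolynomial (Fin 2) ℤ))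
      = Polynomial.CAlgHom := by
    apply Polynomial.algHom_ext
    simp [φ_X1, Polynomial.CAlgHom]
  have := congrFun (congrArg (DFunLike.coe) this) a
  simpa [Polynomial.CAlgHom] using this


theorem key_lemma_x (f : MvPolynomial (Fin 2) ℤ) (hsf : Squarefree f) :
    ∃ u v : MvPolynomial (Fin 2) ℤ, ∃ a : Polynomial ℤ, a ≠ 0 ∧
      u * f + v * pderiv (0 : Fin 2) f = Polynomial.aeval (X 1 : MvPolynomial (Fin 2) ℤ) a := by
  have hq : Squarefree (φ f) := squarefree_mulEquiv φ.toRingEquiv.toMulEquiv hsf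
  obtain ⟨u₁, v₁, a, ha, h⟩ := exists_bezout_aux (squarefree_map_fractionRing hq)
  refine ⟨φ.symm u₁, φ.symm v₁, a, ha, ?_⟩
  apply φ.injective
  rw [map_add, map_mul, map_mul, AlgEquiv.apply_symm_apply, AlgEquiv.apply_symm_apply,
    ← φ_deriv, φ_polyC]
  exact h

theorem key_lemma_y (f : MvPolynomial (Fin 2) ℤ) (hsf : Squarefree f) :
    ∃ u v : MvPolynomial (Fin 2) ℤ, ∃ b : Polynomial ℤ, b ≠ 0 ∧
      u * f + v * pderiv (1 : Fin 2) f = Polynomial.aeval (X 0 : MvPolynomial (Fin 2) ℤ) b := by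
  set σ : Fin 2 ≃ Fin 2 := Equiv.swap 0 1 with hσ
  have hsf' : Squarefree (rename (σ : Fin 2 → Fin 2) f) := by
    have := squarefree_mulEquiv (renameEquiv ℤ σ).toRingEquiv.toMulEquiv hsf
    simpa using this
  obtain ⟨u, v, a, ha, h⟩ := key_lemma_x _ hsf'
  refine ⟨rename σ u, rename σ v, a, ha, ?_⟩
  have happ := congrArg (rename (R := ℤ) σ) h
  have hff : rename (σ : Fin 2 → Fin 2) (rename (σ : Fin 2 → Fin 2) f) = f := by
    rw [rename_rename]
    have : ((σ : Fin 2 → Fin 2) ∘ σ) = id := by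
      funext i; simp [hσ]
    rw [this, rename_id, AlgHom.id_apply]
  have hpd : rename (σ : Fin 2 → Fin 2) (pderiv (0 : Fin 2) (rename σ f))
      = pderiv (1 : Fin 2) f := by
    have h0 : (0 : Fin 2) = σ 1 := by simp [hσ]
    rw [h0, pderiv_rename (Equiv.injective σ), rename_rename]
    have : ((σ : Fin 2 → Fin 2) ∘ σ) = id := by funext i; simp [hσ]
    rw [this, rename_id, AlgHom.id_apply]
  have hrhs : rename (σ : Fin 2 → Fin 2) (Polynomial.aeval (X 1 : MvPolynomial (Fin 2) ℤ) a)
      = Polynomial.aeval (X 0 : MvPolynomial (Fin 2) ℤ) a := by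
    rw [← Polynomial.aeval_algHom_apply (rename (σ : Fin 2 → Fin 2)) (X 1) a]
    simp [hσ]
  rw [map_add, map_mul, map_mul, hff, hpd, hrhs] at happ
  exact happ



theorem stmt_5 (f : MvPolynomial (Fin 2) ℤ) (hsf : Squarefree f) :
    ∃ C : ℕ, 0 < C ∧ ∀ p : ℕ, p.Prime →
      Nat.card {td : ZMod p × ZMod p |
          MvPolynomial.aeval ![td.1, td.2] f = 0 ∧
          MvPolynomial.aeval ![td.1, td.2] (MvPolynomial.pderiv (0 : Fin 2) f) = 0 ∧
          MvPolynomial.aeval ![td.1, td.2] (MvPolynomial.pderiv (1 : Fin 2) f) = 0} ≤ C := by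
  obtain ⟨u, v, a, ha, hxid⟩ := key_lemma_x f hsf
  obtain ⟨u', v', b, hb, hyid⟩ := key_lemma_y f hsf
  set M : ℕ := max a.leadingCoeff.natAbs b.leadingCoeff.natAbs with hM
  refine ⟨b.natDegree * a.natDegree + M * M + 1, Nat.succ_pos _, fun p hp => ?_⟩
  haveI : Fact p.Prime := ⟨hp⟩
  set aa := a.map (Int.castRingHom (ZMod p)) with haa
  set bb := b.map (Int.castRingHom (ZMod p)) with hbb
  set S : Set (ZMod p × ZMod p) := {td : ZMod p × ZMod p |
          MvPolynomial.aeval ![td.1, td.2] f = 0 ∧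
          MvPolynomial.aeval ![td.1, td.2] (MvPolynomial.pderiv (0 : Fin 2) f) = 0 ∧
          MvPolynomial.aeval ![td.1, td.2] (MvPolynomial.pderiv (1 : Fin 2) f) = 0} with hS
  have hroot : ∀ td : ZMod p × ZMod p, td ∈ S → bb.eval td.1 = 0 ∧ aa.eval td.2 = 0 := by
    rintro td ⟨h0, h1, h2⟩
    constructor
    · have e1 := congrArg (MvPolynomial.aeval ![td.1, td.2]) hyid
      rw [map_add, map_mul, map_mul, h0, h2, mul_zero, mul_zero, add_zero,
        ← Polynomial.aeval_algHom_apply] at e1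
      simp only [MvPolynomial.aeval_X, Matrix.cons_val_zero] at e1
      rw [Polynomial.aeval_def, ← Polynomial.eval_map] at e1
      rw [hbb]
      rw [show algebraMap ℤ (ZMod p) = Int.castRingHom (ZMod p) from rfl] at e1
      exact e1.symm
    · have e1 := congrArg (MvPolynomial.aeval ![td.1, td.2]) hxid
      rw [map_add, map_mul, map_mul, h0, h1, mul_zero, mul_zero, add_zero,
        ← Polynomial.aeval_algHom_apply] at e1
      simp only [MvPolynomial.aeval_X, Matrix.cons_val_one, Matrix.head_cons] at e1
      rw [Polynomial.aeval_def, ← Polynomial.eval_map] at e1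
      rw [haa]
      rw [show algebraMap ℤ (ZMod p) = Int.castRingHom (ZMod p) from rfl] at e1
      exact e1.symm
  by_cases hbad : aa = 0 ∨ bb = 0
  · -- bad prime: p ≤ M
    have hpM : p ≤ M := by
      rcases hbad with h | h
      · have hc0 : ((a.leadingCoeff : ℤ) : ZMod p) = 0 := by
          have h2 : aa.coeff a.natDegree = 0 := by rw [h]; simp
          rw [haa, Polynomial.coeff_map] at h2
          rw [Polynomial.leadingCoeff]
          simpa using h2
        rw [ZMod.intCast_zmod_eq_zero_iff_dvd] at hc0
        have hdd : p ∣ a.leadingCoeff.natAbs := by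
          have := Int.natAbs_dvd_natAbs.mpr hc0
          simpa using this
        have := Nat.le_of_dvd (Int.natAbs_pos.mpr (Polynomial.leadingCoeff_ne_zero.mpr ha)) hdd
        exact this.trans (le_max_left _ _)
      · have hc0 : ((b.leadingCoeff : ℤ) : ZMod p) = 0 := by
          have h2 : bb.coeff b.natDegree = 0 := by rw [h]; simp
          rw [hbb, Polynomial.coeff_map] at h2
          rw [Polynomial.leadingCoeff]
          simpa using h2
        rw [ZMod.intCast_zmod_eq_zero_iff_dvd] at hc0
        have hdd : p ∣ b.leadingCoeff.natAbs := by
          have := Int.natAbs_dvd_natAbs.mpr hc0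
          simpa using this
        have := Nat.le_of_dvd (Int.natAbs_pos.mpr (Polynomial.leadingCoeff_ne_zero.mpr hb)) hdd
        exact this.trans (le_max_right _ _)
    have h1 : Nat.card S ≤ Nat.card (ZMod p × ZMod p) := by
      have h3 := Nat.card_mono (Set.finite_univ (α := ZMod p × ZMod p)) (Set.subset_univ S)
      rwa [Nat.card_univ] at h3
    have h2 : Nat.card (ZMod p × ZMod p) = p * p := by
      simp [Nat.card_eq_fintype_card, ZMod.card]
    calc Nat.card S ≤ p * p := h2 ▸ h1
      _ ≤ M * M := Nat.mul_le_mul hpM hpM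
      _ ≤ b.natDegree * a.natDegree + M * M + 1 := by omega
  · push_neg at hbad
    obtain ⟨haa0, hbb0⟩ := hbad
    have hsub : S ⊆ ↑(bb.roots.toFinset ×ˢ aa.roots.toFinset) := by
      intro td htd
      obtain ⟨hT, hD⟩ := hroot td htd
      simp only [Finset.coe_product, Set.mem_prod, Finset.mem_coe, Multiset.mem_toFinset,
        Polynomial.mem_roots']
      exact ⟨⟨hbb0, hT⟩, ⟨haa0, hD⟩⟩
    have h1 : Nat.card S ≤ (bb.roots.toFinset ×ˢ aa.roots.toFinset).card := by
      have := Nat.card_mono (Set.toFinite _) hsub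
      simpa [Nat.card_coe_set_eq, Set.ncard_coe_finset] using this
    have h2 : (bb.roots.toFinset ×ˢ aa.roots.toFinset).card ≤ b.natDegree * a.natDegree := by
      rw [Finset.card_product]
      refine Nat.mul_le_mul ?_ ?_
      · exact (bb.roots.toFinset_card_le.trans (bb.card_roots'.trans
          Polynomial.natDegree_map_le))
      · exact (aa.roots.toFinset_card_le.trans (aa.card_roots'.trans
          Polynomial.natDegree_map_le))
    calc Nat.card S ≤ b.natDegree * a.natDegree := h1.trans h2
      _ ≤ b.natDegree * a.natDegree + M * M + 1 := by omega
end

section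
/- Let ℓ be an odd prime. Then the number of matrices g ∈ GL₂(ℤ/ℓ²ℤ) satisfying (tr g)² = 4·det g in ℤ/ℓ²ℤ is exactly ℓ³(ℓ − 1)(ℓ² + ℓ − 1). Equivalently, for f(x,y) = x² − 4y, |C_f(ℓ²)| / |GL₂(ℤ/ℓ²ℤ)| = (ℓ² + ℓ − 1) / (ℓ²(ℓ² − 1)). -/
open Matrix

namespace Stmt13Aux

variable {ℓ : ℕ}

/-- reduction mod ℓ -/
def phi (ℓ : ℕ) : ZMod (ℓ ^ 2) →+* ZMod ℓ :=
  ZMod.castHom (dvd_pow_self ℓ two_ne_zero) (ZMod ℓ)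

lemma phi_eq (hℓ : ℓ.Prime) (x : ZMod (ℓ ^ 2)) : phi ℓ x = ((x.val : ℕ) : ZMod ℓ) := by
  haveI : NeZero (ℓ ^ 2) := ⟨pow_ne_zero _ hℓ.ne_zero⟩
  rw [phi, ZMod.castHom_apply, ← ZMod.natCast_val]

lemma phi_zero_iff (hℓ : ℓ.Prime) (x : ZMod (ℓ ^ 2)) : phi ℓ x = 0 ↔ ℓ ∣ x.val := by
  rw [phi_eq hℓ, ZMod.natCast_eq_zero_iff]

lemma isUnit_iff (hℓ : ℓ.Prime) (x : ZMod (ℓ ^ 2)) : IsUnit x ↔ phi ℓ x ≠ 0 := by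
  haveI : NeZero (ℓ ^ 2) := ⟨pow_ne_zero _ hℓ.ne_zero⟩
  rw [Ne, phi_zero_iff hℓ]
  constructor
  · intro h hdvd
    rw [← ZMod.natCast_zmod_val x, ZMod.isUnit_iff_coprime,
      Nat.coprime_pow_right_iff (by norm_num)] at h
    exact (Nat.Prime.coprime_iff_not_dvd hℓ).mp h.symm hdvd
  · intro h
    rw [← ZMod.natCast_zmod_val x, ZMod.isUnit_iff_coprime,
      Nat.coprime_pow_right_iff (by norm_num)]
    exact (Nat.coprime_comm.mp ((Nat.Prime.coprime_iff_not_dvd hℓ).mpr h))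

lemma exists_eq_mul (hℓ : ℓ.Prime) {x : ZMod (ℓ ^ 2)} (h : phi ℓ x = 0) :
    ∃ y : ZMod (ℓ ^ 2), x = (ℓ : ZMod (ℓ ^ 2)) * y := by
  haveI : NeZero (ℓ ^ 2) := ⟨pow_ne_zero _ hℓ.ne_zero⟩
  obtain ⟨m, hm⟩ := (phi_zero_iff hℓ x).mp h
  exact ⟨(m : ZMod (ℓ ^ 2)), by rw [← Nat.cast_mul, ← hm, ZMod.natCast_zmod_val]⟩

lemma ell_sq_zero (ℓ : ℕ) : ((ℓ : ZMod (ℓ ^ 2)) * (ℓ : ZMod (ℓ ^ 2))) = 0 := by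
  rw [← Nat.cast_mul, ← sq, ZMod.natCast_self]

lemma mul_eq_zero_of (hℓ : ℓ.Prime) {B C : ZMod (ℓ ^ 2)} (hB : phi ℓ B = 0)
    (hC : phi ℓ C = 0) : B * C = 0 := by
  obtain ⟨y, hy⟩ := exists_eq_mul hℓ hB
  obtain ⟨z, hz⟩ := exists_eq_mul hℓ hC
  subst hy hz
  calc ((ℓ : ZMod (ℓ ^ 2)) * y) * ((ℓ : ZMod (ℓ ^ 2)) * z)
      = ((ℓ : ZMod (ℓ ^ 2)) * (ℓ : ZMod (ℓ ^ 2))) * (y * z) := by ring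
    _ = 0 := by rw [ell_sq_zero]; ring

lemma sq_eq_zero (hℓ : ℓ.Prime) {x : ZMod (ℓ ^ 2)} (h : phi ℓ x = 0) : x ^ 2 = 0 := by
  have h2 := mul_eq_zero_of hℓ h h
  rwa [← pow_two x] at h2

lemma ell_mul_eq_zero_iff (hℓ : ℓ.Prime) (x : ZMod (ℓ ^ 2)) :
    (ℓ : ZMod (ℓ ^ 2)) * x = 0 ↔ phi ℓ x = 0 := by
  haveI : NeZero (ℓ ^ 2) := ⟨pow_ne_zero _ hℓ.ne_zero⟩
  constructor
  · intro h
    rw [phi_zero_iff hℓ]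
    rw [← ZMod.natCast_zmod_val x, ← Nat.cast_mul,
      ZMod.natCast_eq_zero_iff] at h
    exact (Nat.mul_dvd_mul_iff_left hℓ.pos).mp (by rw [← pow_two]; exact h)
  · intro h
    obtain ⟨y, hy⟩ := exists_eq_mul hℓ h
    subst hy
    rw [← mul_assoc, ell_sq_zero, zero_mul]



/-- decomposition of `ZMod (ℓ^2)` as a product of two copies of `ZMod ℓ` (as types),
whose first component is reduction mod ℓ. -/
def toProd (hℓ : ℓ.Prime) : ZMod (ℓ ^ 2) ≃ ZMod ℓ × ZMod ℓ where
  toFun x := (phi ℓ x, ((x.val / ℓ : ℕ) : ZMod ℓ))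
  invFun p := ((p.1.val + ℓ * p.2.val : ℕ) : ZMod (ℓ ^ 2))
  left_inv x := by
    haveI : NeZero ℓ := ⟨hℓ.ne_zero⟩
    haveI : NeZero (ℓ ^ 2) := ⟨pow_ne_zero _ hℓ.ne_zero⟩
    have hx : x.val < ℓ ^ 2 := ZMod.val_lt x
    have hdiv : x.val / ℓ < ℓ := Nat.div_lt_of_lt_mul (by rwa [← pow_two])
    dsimp only
    rw [phi_eq hℓ, ZMod.val_natCast, ZMod.val_natCast_of_lt hdiv,
      Nat.mod_add_div, ZMod.natCast_zmod_val]
  right_inv p := by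
    haveI : NeZero ℓ := ⟨hℓ.ne_zero⟩
    haveI : NeZero (ℓ ^ 2) := ⟨pow_ne_zero _ hℓ.ne_zero⟩
    have h1 : p.1.val < ℓ := ZMod.val_lt p.1
    have h2 : p.2.val < ℓ := ZMod.val_lt p.2
    have hm : p.1.val + ℓ * p.2.val < ℓ ^ 2 := by
      rw [pow_two]
      nlinarith [Nat.mul_le_mul_left ℓ (show p.2.val + 1 ≤ ℓ by omega)]
    have hval : ((p.1.val + ℓ * p.2.val : ℕ) : ZMod (ℓ ^ 2)).val
        = p.1.val + ℓ * p.2.val := ZMod.val_natCast_of_lt hm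
    have hfst : phi ℓ ((p.1.val + ℓ * p.2.val : ℕ) : ZMod (ℓ ^ 2)) = p.1 := by
      rw [phi_eq hℓ, hval]
      push_cast [ZMod.natCast_self, ZMod.natCast_zmod_val]
      ring
    have hsnd : (p.1.val + ℓ * p.2.val) / ℓ = p.2.val := by
      rw [Nat.add_mul_div_left _ _ hℓ.pos, Nat.div_eq_of_lt h1, zero_add]
    ext
    · exact hfst
    · dsimp only
      rw [hval, hsnd, ZMod.natCast_zmod_val]

lemma toProd_fst (hℓ : ℓ.Prime) (x : ZMod (ℓ ^ 2)) : (toProd hℓ x).1 = phi ℓ x := rfl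

lemma toProd_zero (hℓ : ℓ.Prime) : toProd hℓ 0 = (0, 0) := by
  haveI : NeZero (ℓ ^ 2) := ⟨pow_ne_zero _ hℓ.ne_zero⟩
  simp [toProd, ZMod.val_zero, map_zero]

lemma card_ker (hℓ : ℓ.Prime) : Nat.card {x : ZMod (ℓ ^ 2) // phi ℓ x = 0} = ℓ := by
  haveI : NeZero ℓ := ⟨hℓ.ne_zero⟩
  have e1 : {x : ZMod (ℓ ^ 2) // phi ℓ x = 0} ≃ {p : ZMod ℓ × ZMod ℓ // p.1 = 0} :=
    (toProd hℓ).subtypeEquiv (fun x => by rw [← toProd_fst hℓ])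
  have e2 : {p : ZMod ℓ × ZMod ℓ // p.1 = 0} ≃ ZMod ℓ :=
    { toFun := fun p => p.1.2
      invFun := fun b => ⟨(0, b), rfl⟩
      left_inv := fun p => by
        ext
        · exact p.2.symm
        · rfl
      right_inv := fun b => rfl }
  rw [Nat.card_congr (e1.trans e2), Nat.card_eq_fintype_card, ZMod.card]

lemma card_ker_ne (hℓ : ℓ.Prime) :
    Nat.card {x : ZMod (ℓ ^ 2) // phi ℓ x = 0 ∧ x ≠ 0} = ℓ - 1 := by
  haveI : NeZero ℓ := ⟨hℓ.ne_zero⟩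
  have e1 : {x : ZMod (ℓ ^ 2) // phi ℓ x = 0 ∧ x ≠ 0}
      ≃ {p : ZMod ℓ × ZMod ℓ // p.1 = 0 ∧ p ≠ (0, 0)} :=
    (toProd hℓ).subtypeEquiv (fun x => by
      rw [← toProd_fst hℓ]
      constructor
      · rintro ⟨h1, h2⟩
        refine ⟨h1, fun hc => h2 ?_⟩
        have := (toProd hℓ).injective (hc.trans (toProd_zero hℓ).symm)
        exact this
      · rintro ⟨h1, h2⟩
        refine ⟨h1, fun hc => h2 ?_⟩
        rw [hc, toProd_zero hℓ])
  have e2 : {p : ZMod ℓ × ZMod ℓ // p.1 = 0 ∧ p ≠ (0, 0)} ≃ {b : ZMod ℓ // b ≠ 0} :=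
    { toFun := fun p => ⟨p.1.2, fun h => p.2.2 (Prod.ext p.2.1 h)⟩
      invFun := fun b => ⟨(0, b.1), ⟨rfl, fun h => b.2 (congrArg Prod.snd h)⟩⟩
      left_inv := fun p => by
        ext
        · exact p.2.1.symm
        · rfl
      right_inv := fun b => rfl }
  rw [Nat.card_congr (e1.trans e2), Nat.card_eq_fintype_card]
  rw [Fintype.card_subtype_compl (p := fun b : ZMod ℓ => b = 0)]
  simp [ZMod.card]

lemma isUnit_two (hℓ : ℓ.Prime) (hodd : ℓ ≠ 2) : IsUnit (2 : ZMod (ℓ ^ 2)) := by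
  have : ((2 : ℕ) : ZMod (ℓ ^ 2)) = (2 : ZMod (ℓ ^ 2)) := by norm_cast
  rw [← this, ZMod.isUnit_iff_coprime]
  exact Nat.Coprime.pow_right _ (((Nat.coprime_primes Nat.prime_two hℓ).mpr
    (fun h => hodd h.symm)))

lemma isUnit_four (hℓ : ℓ.Prime) (hodd : ℓ ≠ 2) : IsUnit (4 : ZMod (ℓ ^ 2)) := by
  have h2 := isUnit_two hℓ hodd
  have : (4 : ZMod (ℓ ^ 2)) = 2 * 2 := by norm_num
  rw [this]
  exact h2.mul h2

lemma card_units (hℓ : ℓ.Prime) : Nat.card (ZMod (ℓ ^ 2))ˣ = ℓ * (ℓ - 1) := by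
  haveI : NeZero (ℓ ^ 2) := ⟨pow_ne_zero _ hℓ.ne_zero⟩
  rw [Nat.card_eq_fintype_card, ZMod.card_units_eq_totient,
    Nat.totient_prime_pow hℓ (by norm_num)]
  norm_num






lemma card_split {α : Type*} [Finite α] (P Q : α → Prop) :
    Nat.card {x : α // P x} =
      Nat.card {x : α // P x ∧ Q x} + Nat.card {x : α // P x ∧ ¬ Q x} := by
  classical
  have e : {x : α // P x} ≃ {x : α // P x ∧ Q x} ⊕ {x : α // P x ∧ ¬ Q x} := by
    refine ((Equiv.sumCompl (fun x : {x : α // P x} => Q x.1)).symm.trans ?_)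
    exact Equiv.sumCongr (Equiv.subtypeSubtypeEquivSubtypeInter P Q)
      (Equiv.subtypeSubtypeEquivSubtypeInter P (fun x => ¬ Q x))
  rw [Nat.card_congr e, Nat.card_sum]

/-- units of a monoid as a subtype -/
noncomputable def unitsEquivSubtype (M : Type*) [Monoid M] : Mˣ ≃ {x : M // IsUnit x} where
  toFun u := ⟨u, u.isUnit⟩
  invFun x := x.2.unit
  left_inv u := Units.ext (IsUnit.unit_spec _)
  right_inv x := Subtype.ext x.2.unit_spec

lemma card_T1 (hℓ : ℓ.Prime) :
    Nat.card {p : ZMod (ℓ ^ 2) × ZMod (ℓ ^ 2) × ZMod (ℓ ^ 2) //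
      (p.1 ^ 2 + p.2.1 * p.2.2 = 0) ∧ IsUnit p.2.1} = ℓ ^ 2 * (ℓ * (ℓ - 1)) := by
  haveI : NeZero (ℓ ^ 2) := ⟨pow_ne_zero _ hℓ.ne_zero⟩
  have e : {p : ZMod (ℓ ^ 2) × ZMod (ℓ ^ 2) × ZMod (ℓ ^ 2) //
      (p.1 ^ 2 + p.2.1 * p.2.2 = 0) ∧ IsUnit p.2.1}
      ≃ ZMod (ℓ ^ 2) × (ZMod (ℓ ^ 2))ˣ :=
    { toFun := fun x => (x.1.1, x.2.2.unit)
      invFun := fun vu => ⟨(vu.1, (vu.2 : ZMod (ℓ ^ 2)), (↑vu.2⁻¹ : ZMod (ℓ ^ 2)) * (-vu.1 ^ 2)),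
        by
          constructor
          · have h := vu.2.mul_inv
            dsimp only
            linear_combination (-vu.1 ^ 2) * h
          · exact vu.2.isUnit⟩
      left_inv := fun x => by
        obtain ⟨⟨v, B, C⟩, hP, hu⟩ := x
        have hBu : (hu.unit : ZMod (ℓ ^ 2)) = B := IsUnit.unit_spec hu
        have hinv : ((hu.unit⁻¹ : _) : ZMod (ℓ ^ 2)) * (hu.unit : ZMod (ℓ ^ 2)) = 1 :=
          hu.unit.inv_mul
        ext
        · rfl
        · exact hBu
        · dsimp only at hP ⊢
          linear_combination (-(((hu.unit⁻¹ : _) : ZMod (ℓ ^ 2)))) * hP + C * hinv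
            + (-(((hu.unit⁻¹ : _) : ZMod (ℓ ^ 2))) * C) * hBu
      right_inv := fun vu => by
        ext
        · rfl
        · exact congrArg Units.val (IsUnit.unit_of_val_units _)
        }
  rw [Nat.card_congr e, Nat.card_prod, Nat.card_eq_fintype_card (α := ZMod (ℓ ^ 2)),
    ZMod.card, card_units hℓ]

lemma exists_unit_mul (hℓ : ℓ.Prime) {x : ZMod (ℓ ^ 2)} (h : phi ℓ x = 0) (hx : x ≠ 0) :
    ∃ y : ZMod (ℓ ^ 2), IsUnit y ∧ x = (ℓ : ZMod (ℓ ^ 2)) * y := by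
  haveI : NeZero (ℓ ^ 2) := ⟨pow_ne_zero _ hℓ.ne_zero⟩
  obtain ⟨m, hm⟩ := (phi_zero_iff hℓ x).mp h
  have hvlt : x.val < ℓ * ℓ := by rw [← pow_two]; exact ZMod.val_lt x
  have hmlt : m < ℓ := by
    by_contra hc
    push_neg at hc
    have h2 : ℓ * ℓ ≤ ℓ * m := Nat.mul_le_mul le_rfl hc
    omega
  have hm0 : m ≠ 0 := by
    intro h0
    apply hx
    have : x.val = 0 := by rw [hm, h0, Nat.mul_zero]
    rwa [ZMod.val_eq_zero] at this
  refine ⟨(m : ZMod (ℓ ^ 2)), ?_, ?_⟩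
  · rw [isUnit_iff hℓ, Ne, phi_zero_iff hℓ,
      ZMod.val_natCast_of_lt (lt_of_lt_of_le hmlt (Nat.le_self_pow two_ne_zero ℓ))]
    intro hdvd
    exact absurd (Nat.le_of_dvd (Nat.pos_of_ne_zero hm0) hdvd) (not_le.mpr hmlt)
  · rw [← Nat.cast_mul, ← hm, ZMod.natCast_zmod_val]

lemma K2_iff (hℓ : ℓ.Prime) (B C : ZMod (ℓ ^ 2)) :
    ((phi ℓ B = 0 ∧ B * C = 0) ∧ B ≠ 0) ↔ ((phi ℓ B = 0 ∧ B ≠ 0) ∧ phi ℓ C = 0) := by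
  haveI : Fact ℓ.Prime := ⟨hℓ⟩
  constructor
  · rintro ⟨⟨hB, hBC⟩, hBne⟩
    refine ⟨⟨hB, hBne⟩, ?_⟩
    obtain ⟨y, hy, rfl⟩ := exists_unit_mul hℓ hB hBne
    rw [mul_assoc] at hBC
    have h1 : phi ℓ (y * C) = 0 := (ell_mul_eq_zero_iff hℓ _).mp hBC
    rw [_root_.map_mul] at h1
    rcases mul_eq_zero.mp h1 with h | h
    · exact absurd h ((isUnit_iff hℓ y).mp hy)
    · exact h
  · rintro ⟨⟨hB, hBne⟩, hC⟩
    exact ⟨⟨hB, mul_eq_zero_of hℓ hB hC⟩, hBne⟩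

lemma card_K (hℓ : ℓ.Prime) :
    Nat.card {q : ZMod (ℓ ^ 2) × ZMod (ℓ ^ 2) // phi ℓ q.1 = 0 ∧ q.1 * q.2 = 0}
      = ℓ ^ 2 + (ℓ - 1) * ℓ := by
  haveI : NeZero (ℓ ^ 2) := ⟨pow_ne_zero _ hℓ.ne_zero⟩
  rw [card_split (fun q : ZMod (ℓ ^ 2) × ZMod (ℓ ^ 2) => phi ℓ q.1 = 0 ∧ q.1 * q.2 = 0)
    (fun q => q.1 = 0)]
  congr 1
  · -- B = 0 piece
    have e1 : {q : ZMod (ℓ ^ 2) × ZMod (ℓ ^ 2) //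
        (phi ℓ q.1 = 0 ∧ q.1 * q.2 = 0) ∧ q.1 = 0} ≃ {q : ZMod (ℓ ^ 2) × ZMod (ℓ ^ 2) // q.1 = 0} :=
      Equiv.subtypeEquivRight (fun (q : ZMod (ℓ ^ 2) × ZMod (ℓ ^ 2)) => by
        constructor
        · rintro ⟨_, h⟩; exact h
        · rintro h; exact ⟨⟨by rw [h, map_zero], by rw [h, zero_mul]⟩, h⟩)
    rw [Nat.card_congr (e1.trans (Equiv.prodSubtypeFstEquivSubtypeProd (p := fun a : ZMod (ℓ ^ 2) => a = 0))), Nat.card_prod,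
      Nat.card_eq_fintype_card (α := {a : ZMod (ℓ ^ 2) // a = 0}),
      Fintype.card_subtype_eq (0 : ZMod (ℓ ^ 2)),
      Nat.card_eq_fintype_card (α := ZMod (ℓ ^ 2)), ZMod.card, one_mul]
  · -- B ≠ 0 piece
    have e1 : {q : ZMod (ℓ ^ 2) × ZMod (ℓ ^ 2) //
        (phi ℓ q.1 = 0 ∧ q.1 * q.2 = 0) ∧ ¬ q.1 = 0}
        ≃ {x : ZMod (ℓ ^ 2) // phi ℓ x = 0 ∧ x ≠ 0} × {x : ZMod (ℓ ^ 2) // phi ℓ x = 0} :=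
      (Equiv.subtypeEquivRight (fun (q : ZMod (ℓ ^ 2) × ZMod (ℓ ^ 2)) => K2_iff hℓ q.1 q.2)).trans
        (Equiv.subtypeProdEquivProd (p := fun x : ZMod (ℓ ^ 2) => phi ℓ x = 0 ∧ x ≠ 0)
          (q := fun x : ZMod (ℓ ^ 2) => phi ℓ x = 0))
    rw [Nat.card_congr e1, Nat.card_prod, card_ker_ne hℓ, card_ker hℓ]

lemma T2_iff (hℓ : ℓ.Prime) (p : ZMod (ℓ ^ 2) × ZMod (ℓ ^ 2) × ZMod (ℓ ^ 2)) :
    ((p.1 ^ 2 + p.2.1 * p.2.2 = 0) ∧ ¬ IsUnit p.2.1)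
      ↔ (phi ℓ p.1 = 0 ∧ (phi ℓ p.2.1 = 0 ∧ p.2.1 * p.2.2 = 0)) := by
  haveI : Fact ℓ.Prime := ⟨hℓ⟩
  obtain ⟨v, B, C⟩ := p
  dsimp only
  constructor
  · rintro ⟨hP, hu⟩
    have hB : phi ℓ B = 0 := by
      by_contra hc
      exact hu ((isUnit_iff hℓ B).mpr hc)
    have hv : phi ℓ v = 0 := by
      have h1 : (phi ℓ v) ^ 2 = 0 := by
        have := congrArg (phi ℓ) hP
        rw [map_add, map_pow, _root_.map_mul, map_zero, hB, zero_mul, add_zero] at this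
        exact this
      exact pow_eq_zero_iff two_ne_zero |>.mp h1
    have hv2 : v ^ 2 = 0 := sq_eq_zero hℓ hv
    exact ⟨hv, hB, by linear_combination hP - hv2⟩
  · rintro ⟨hv, hB, hBC⟩
    have hv2 : v ^ 2 = 0 := sq_eq_zero hℓ hv
    refine ⟨by rw [hv2, hBC, add_zero], ?_⟩
    rw [isUnit_iff hℓ, not_not]
    exact hB

lemma card_T2 (hℓ : ℓ.Prime) :
    Nat.card {p : ZMod (ℓ ^ 2) × ZMod (ℓ ^ 2) × ZMod (ℓ ^ 2) //
      (p.1 ^ 2 + p.2.1 * p.2.2 = 0) ∧ ¬ IsUnit p.2.1} = ℓ * (ℓ ^ 2 + (ℓ - 1) * ℓ) := by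
  haveI : NeZero (ℓ ^ 2) := ⟨pow_ne_zero _ hℓ.ne_zero⟩
  have e1 : {p : ZMod (ℓ ^ 2) × ZMod (ℓ ^ 2) × ZMod (ℓ ^ 2) //
      (p.1 ^ 2 + p.2.1 * p.2.2 = 0) ∧ ¬ IsUnit p.2.1}
      ≃ {x : ZMod (ℓ ^ 2) // phi ℓ x = 0}
        × {q : ZMod (ℓ ^ 2) × ZMod (ℓ ^ 2) // phi ℓ q.1 = 0 ∧ q.1 * q.2 = 0} :=
    (Equiv.subtypeEquivRight (fun p => T2_iff hℓ p)).trans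
      (Equiv.subtypeProdEquivProd (p := fun x : ZMod (ℓ ^ 2) => phi ℓ x = 0)
        (q := fun q : ZMod (ℓ ^ 2) × ZMod (ℓ ^ 2) => phi ℓ q.1 = 0 ∧ q.1 * q.2 = 0))
  rw [Nat.card_congr e1, Nat.card_prod, card_ker hℓ, card_K hℓ]

lemma card_T (hℓ : ℓ.Prime) :
    Nat.card {p : ZMod (ℓ ^ 2) × ZMod (ℓ ^ 2) × ZMod (ℓ ^ 2) //
      p.1 ^ 2 + p.2.1 * p.2.2 = 0}
      = ℓ ^ 2 * (ℓ * (ℓ - 1)) + ℓ * (ℓ ^ 2 + (ℓ - 1) * ℓ) := by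
  haveI : NeZero (ℓ ^ 2) := ⟨pow_ne_zero _ hℓ.ne_zero⟩
  rw [card_split (fun p : ZMod (ℓ ^ 2) × ZMod (ℓ ^ 2) × ZMod (ℓ ^ 2) =>
      p.1 ^ 2 + p.2.1 * p.2.2 = 0) (fun p => IsUnit p.2.1),
    card_T1 hℓ, card_T2 hℓ]

/-- units satisfying a predicate vs. elements that are units and satisfy it -/
noncomputable def unitsPredEquiv {M : Type*} [Monoid M] (p : M → Prop) :
    {u : Mˣ // p (u : M)} ≃ {x : M // IsUnit x ∧ p x} where
  toFun u := ⟨u.1, u.1.isUnit, u.2⟩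
  invFun x := ⟨x.2.1.unit, by rw [x.2.1.unit_spec]; exact x.2.2⟩
  left_inv u := Subtype.ext (IsUnit.unit_of_val_units _)
  right_inv x := Subtype.ext x.2.1.unit_spec

/-- a 2x2 matrix as a 4-tuple of entries -/
def matEquiv {α : Type*} : Matrix (Fin 2) (Fin 2) α ≃ α × α × α × α where
  toFun M := (M 0 0, M 0 1, M 1 0, M 1 1)
  invFun q := !![q.1, q.2.1; q.2.2.1, q.2.2.2]
  left_inv M := (Matrix.eta_fin_two M).symm
  right_inv q := by
    obtain ⟨a, b, c, d⟩ := q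
    simp

lemma main_iff (hℓ : ℓ.Prime) (hodd : ℓ ≠ 2) (a b c d : ZMod (ℓ ^ 2)) :
    (IsUnit (a * d - b * c) ∧ (a + d) ^ 2 = 4 * (a * d - b * c))
      ↔ (IsUnit (a + d) ∧ (a - d) ^ 2 + (2 * b) * (2 * c) = 0) := by
  constructor
  · rintro ⟨h1, h2⟩
    refine ⟨?_, by linear_combination h2⟩
    have hsq : IsUnit ((a + d) ^ 2) := by
      rw [h2]; exact (isUnit_four hℓ hodd).mul h1
    exact (isUnit_pow_iff two_ne_zero).mp hsq
  · rintro ⟨hu, h0⟩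
    have h2 : (a + d) ^ 2 = 4 * (a * d - b * c) := by linear_combination h0
    refine ⟨?_, h2⟩
    have h4 : IsUnit (4 * (a * d - b * c)) := by rw [← h2]; exact hu.pow 2
    exact isUnit_of_mul_isUnit_right h4

lemma card_main (hℓ : ℓ.Prime) (hodd : ℓ ≠ 2) :
    Nat.card {q : ZMod (ℓ ^ 2) × ZMod (ℓ ^ 2) × ZMod (ℓ ^ 2) × ZMod (ℓ ^ 2) //
        IsUnit (q.1 * q.2.2.2 - q.2.1 * q.2.2.1)
          ∧ (q.1 + q.2.2.2) ^ 2 = 4 * (q.1 * q.2.2.2 - q.2.1 * q.2.2.1)}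
      = (ℓ * (ℓ - 1)) * (ℓ ^ 2 * (ℓ * (ℓ - 1)) + ℓ * (ℓ ^ 2 + (ℓ - 1) * ℓ)) := by
  haveI : NeZero (ℓ ^ 2) := ⟨pow_ne_zero _ hℓ.ne_zero⟩
  set i2 : ZMod (ℓ ^ 2) := Ring.inverse 2 with hi2def
  have hi2 : i2 * 2 = 1 := Ring.inverse_mul_cancel _ (isUnit_two hℓ hodd)
  let cv : (ZMod (ℓ ^ 2) × ZMod (ℓ ^ 2) × ZMod (ℓ ^ 2) × ZMod (ℓ ^ 2))
      ≃ ZMod (ℓ ^ 2) × (ZMod (ℓ ^ 2) × ZMod (ℓ ^ 2) × ZMod (ℓ ^ 2)) :=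
    { toFun := fun q => (q.1 + q.2.2.2, (q.1 - q.2.2.2, 2 * q.2.1, 2 * q.2.2.1))
      invFun := fun p => (i2 * (p.1 + p.2.1), i2 * p.2.2.1, i2 * p.2.2.2, i2 * (p.1 - p.2.1))
      left_inv := fun q => by
        obtain ⟨a, b, c, d⟩ := q
        refine Prod.ext ?_ (Prod.ext ?_ (Prod.ext ?_ ?_)) <;> dsimp only
        · linear_combination a * hi2
        · linear_combination b * hi2
        · linear_combination c * hi2
        · linear_combination d * hi2
      right_inv := fun p => by
        obtain ⟨u, v, B, C⟩ := p
        refine Prod.ext ?_ (Prod.ext ?_ (Prod.ext ?_ ?_)) <;> dsimp only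
        · linear_combination u * hi2
        · linear_combination v * hi2
        · linear_combination B * hi2
        · linear_combination C * hi2 }
  have E := (Equiv.subtypeEquiv (p := fun q : ZMod (ℓ ^ 2) × ZMod (ℓ ^ 2) × ZMod (ℓ ^ 2) × ZMod (ℓ ^ 2) =>
        IsUnit (q.1 * q.2.2.2 - q.2.1 * q.2.2.1)
          ∧ (q.1 + q.2.2.2) ^ 2 = 4 * (q.1 * q.2.2.2 - q.2.1 * q.2.2.1))
      (q := fun p : ZMod (ℓ ^ 2) × (ZMod (ℓ ^ 2) × ZMod (ℓ ^ 2) × ZMod (ℓ ^ 2)) =>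
        IsUnit p.1 ∧ p.2.1 ^ 2 + p.2.2.1 * p.2.2.2 = 0)
      cv (fun q => by
      obtain ⟨a, b, c, d⟩ := q
      exact main_iff hℓ hodd a b c d)).trans
    (Equiv.subtypeProdEquivProd (p := fun x : ZMod (ℓ ^ 2) => IsUnit x)
      (q := fun p : ZMod (ℓ ^ 2) × ZMod (ℓ ^ 2) × ZMod (ℓ ^ 2) =>
        p.1 ^ 2 + p.2.1 * p.2.2 = 0))
  rw [Nat.card_congr E, Nat.card_prod,
    Nat.card_congr (unitsEquivSubtype (ZMod (ℓ ^ 2))).symm, card_units hℓ, card_T hℓ]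

lemma card_pred_GL (hℓ : ℓ.Prime) (hodd : ℓ ≠ 2) :
    Nat.card {g : GL (Fin 2) (ZMod (ℓ ^ 2)) //
        (Matrix.trace ((g : Matrix (Fin 2) (Fin 2) (ZMod (ℓ ^ 2))))) ^ 2
          = 4 * Matrix.det (g : Matrix (Fin 2) (Fin 2) (ZMod (ℓ ^ 2)))}
      = (ℓ * (ℓ - 1)) * (ℓ ^ 2 * (ℓ * (ℓ - 1)) + ℓ * (ℓ ^ 2 + (ℓ - 1) * ℓ)) := by
  have E1 := unitsPredEquiv (M := Matrix (Fin 2) (Fin 2) (ZMod (ℓ ^ 2)))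
    (fun M => (Matrix.trace M) ^ 2 = 4 * Matrix.det M)
  have E2 : {x : Matrix (Fin 2) (Fin 2) (ZMod (ℓ ^ 2)) //
        IsUnit x ∧ (Matrix.trace x) ^ 2 = 4 * Matrix.det x}
      ≃ {q : ZMod (ℓ ^ 2) × ZMod (ℓ ^ 2) × ZMod (ℓ ^ 2) × ZMod (ℓ ^ 2) //
        IsUnit (q.1 * q.2.2.2 - q.2.1 * q.2.2.1)
          ∧ (q.1 + q.2.2.2) ^ 2 = 4 * (q.1 * q.2.2.2 - q.2.1 * q.2.2.1)} :=
    Equiv.subtypeEquiv matEquiv (fun M => by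
      rw [Matrix.isUnit_iff_isUnit_det, Matrix.det_fin_two, Matrix.trace_fin_two]
      exact Iff.rfl)
  rw [Nat.card_congr (E1.trans E2), card_main hℓ hodd]

lemma card_GL_full (hℓ : ℓ.Prime) :
    Nat.card (GL (Fin 2) (ZMod (ℓ ^ 2)))
      = ((ℓ ^ 2 - 1) * (ℓ ^ 2 - ℓ)) * ℓ ^ 4 := by
  haveI : NeZero ℓ := ⟨hℓ.ne_zero⟩
  haveI : NeZero (ℓ ^ 2) := ⟨pow_ne_zero _ hℓ.ne_zero⟩
  haveI : Fact ℓ.Prime := ⟨hℓ⟩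
  have e1 : GL (Fin 2) (ZMod (ℓ ^ 2)) ≃ {M : Matrix (Fin 2) (Fin 2) (ZMod (ℓ ^ 2)) //
      IsUnit M.det} :=
    (unitsEquivSubtype _).trans (Equiv.subtypeEquivRight
      (fun M => Matrix.isUnit_iff_isUnit_det M))
  let mm : Matrix (Fin 2) (Fin 2) (ZMod (ℓ ^ 2))
      ≃ Matrix (Fin 2) (Fin 2) (ZMod ℓ) × Matrix (Fin 2) (Fin 2) (ZMod ℓ) :=
    { toFun := fun M => (Matrix.of fun i j => (toProd hℓ (M i j)).1,
        Matrix.of fun i j => (toProd hℓ (M i j)).2)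
      invFun := fun p => Matrix.of fun i j => (toProd hℓ).symm (p.1 i j, p.2 i j)
      left_inv := fun M => by
        ext i j
        show (toProd hℓ).symm ((toProd hℓ (M i j)).1, (toProd hℓ (M i j)).2) = M i j
        rw [Prod.mk.eta, Equiv.symm_apply_apply]
      right_inv := fun p => by
        refine Prod.ext ?_ ?_ <;> ext i j <;>
          · dsimp only
            simp only [Matrix.of_apply, Equiv.apply_symm_apply] }
  have hmm : ∀ M : Matrix (Fin 2) (Fin 2) (ZMod (ℓ ^ 2)),
      (mm M).1 = (phi ℓ).mapMatrix M := fun M => rfl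
  have e2 : {M : Matrix (Fin 2) (Fin 2) (ZMod (ℓ ^ 2)) // IsUnit M.det}
      ≃ {p : Matrix (Fin 2) (Fin 2) (ZMod ℓ) × Matrix (Fin 2) (Fin 2) (ZMod ℓ) //
        IsUnit p.1.det} :=
    Equiv.subtypeEquiv mm (fun M => by
      rw [hmm M, ← RingHom.map_det, isUnit_iff hℓ, isUnit_iff_ne_zero])
  have e3 := Equiv.prodSubtypeFstEquivSubtypeProd
    (p := fun N : Matrix (Fin 2) (Fin 2) (ZMod ℓ) => IsUnit N.det) (β := Matrix (Fin 2) (Fin 2) (ZMod ℓ))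
  have e4 : {N : Matrix (Fin 2) (Fin 2) (ZMod ℓ) // IsUnit N.det} ≃ GL (Fin 2) (ZMod ℓ) :=
    ((unitsEquivSubtype _).trans (Equiv.subtypeEquivRight
      (fun M => Matrix.isUnit_iff_isUnit_det M))).symm
  rw [Nat.card_congr (((e1.trans e2).trans e3).trans (Equiv.prodCongr e4 (Equiv.refl _)))]
  rw [Nat.card_prod, Matrix.card_GL_field, ZMod.card]
  have hmatcard : Nat.card (Matrix (Fin 2) (Fin 2) (ZMod ℓ)) = ℓ ^ 4 := by
    rw [Nat.card_congr (Matrix.of.symm.trans (Equiv.refl _)), Nat.card_eq_fintype_card,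
      Fintype.card_fun, Fintype.card_fun, ZMod.card, Fintype.card_fin, ← pow_mul]
  rw [hmatcard, Fin.prod_univ_two]
  norm_num

end Stmt13Aux

theorem stmt_13 (ℓ : ℕ) (hℓ : ℓ.Prime) (hodd : ℓ ≠ 2) :
    (Nat.card {g : GL (Fin 2) (ZMod (ℓ ^ 2)) |
        (Matrix.trace (g : Matrix (Fin 2) (Fin 2) (ZMod (ℓ ^ 2)))) ^ 2 =
          4 * Matrix.det (g : Matrix (Fin 2) (Fin 2) (ZMod (ℓ ^ 2)))} : ℤ) =
      (ℓ : ℤ) ^ 3 * ((ℓ : ℤ) - 1) * ((ℓ : ℤ) ^ 2 + (ℓ : ℤ) - 1) ∧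
    (Nat.card {g : GL (Fin 2) (ZMod (ℓ ^ 2)) |
        (Matrix.trace (g : Matrix (Fin 2) (Fin 2) (ZMod (ℓ ^ 2)))) ^ 2 =
          4 * Matrix.det (g : Matrix (Fin 2) (Fin 2) (ZMod (ℓ ^ 2)))} : ℝ) /
      (Nat.card (GL (Fin 2) (ZMod (ℓ ^ 2))) : ℝ) =
      ((ℓ : ℝ) ^ 2 + (ℓ : ℝ) - 1) / ((ℓ : ℝ) ^ 2 * ((ℓ : ℝ) ^ 2 - 1)) := by
  have h1 : (1 : ℕ) ≤ ℓ := hℓ.one_lt.le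
  have h2 : ℓ ≤ ℓ ^ 2 := Nat.le_self_pow two_ne_zero ℓ
  have h3 : (1 : ℕ) ≤ ℓ ^ 2 := Nat.one_le_pow _ _ hℓ.pos
  have hcard : Nat.card {g : GL (Fin 2) (ZMod (ℓ ^ 2)) |
      (Matrix.trace (g : Matrix (Fin 2) (Fin 2) (ZMod (ℓ ^ 2)))) ^ 2 =
        4 * Matrix.det (g : Matrix (Fin 2) (Fin 2) (ZMod (ℓ ^ 2)))}
      = (ℓ * (ℓ - 1)) * (ℓ ^ 2 * (ℓ * (ℓ - 1)) + ℓ * (ℓ ^ 2 + (ℓ - 1) * ℓ)) :=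
    Stmt13Aux.card_pred_GL hℓ hodd
  have hl3 : (3 : ℝ) ≤ (ℓ : ℝ) := by
    have : 3 ≤ ℓ := by
      have := hℓ.two_le
      omega
    exact_mod_cast this
  constructor
  · rw [hcard]
    push_cast [Nat.cast_sub h1]
    ring
  · rw [hcard, Stmt13Aux.card_GL_full hℓ]
    push_cast [Nat.cast_sub h1, Nat.cast_sub h2, Nat.cast_sub h3]
    have hx2 : (9 : ℝ) ≤ (ℓ : ℝ) ^ 2 := by nlinarith [hl3]
    have hxx : (3 : ℝ) * (ℓ : ℝ) ≤ (ℓ : ℝ) ^ 2 := by nlinarith [hl3]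
    have p1 : (0 : ℝ) < (ℓ : ℝ) ^ 2 - 1 := by linarith
    have p2 : (0 : ℝ) < (ℓ : ℝ) ^ 2 - (ℓ : ℝ) := by linarith
    have p3 : (0 : ℝ) < (ℓ : ℝ) ^ 4 := by positivity
    have p4 : (0 : ℝ) < (ℓ : ℝ) ^ 2 := by positivity
    have hY : (0 : ℝ) < (((ℓ : ℝ) ^ 2 - 1) * ((ℓ : ℝ) ^ 2 - (ℓ : ℝ))) * (ℓ : ℝ) ^ 4 :=
      mul_pos (mul_pos p1 p2) p3
    have hW : (0 : ℝ) < (ℓ : ℝ) ^ 2 * ((ℓ : ℝ) ^ 2 - 1) := mul_pos p4 p1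
    rw [div_eq_div_iff hY.ne' hW.ne']
    ring
end
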